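/- arXiv:1704.01687 — 2 statements merged into one kernel-verified Lean document; each statement's English description precedes it below -/
import Mathlib

section
/- The largest diameter of a lattice (d,1)-polytope (convex hull of points in {0,1}^d) equals d. -/
open Set

noncomputable def edgeGraph (d : ℕ) (P : Set (Fin d → ℝ)) : SimpleGraph (Fin d → ℝ) where
  Adj a b := a ≠ b ∧ IsExtreme ℝ P (segment ℝ a b)
  symm := by
    constructor
    intro a b h
    exact ⟨h.1.symm, by rw [segment_symm]; exact h.2⟩
  loopless := by
    constructor
    intro a h
    exact h.1 rfl

/-- Edge-graph diameter of a polytope, as the sup of pairwise distances between vertices. -/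
noncomputable def polyDiam (d : ℕ) (P : Set (Fin d → ℝ)) : ℕ :=
  sSup {n : ℕ | ∃ u ∈ P.extremePoints ℝ, ∃ v ∈ P.extremePoints ℝ,
    (edgeGraph d P).dist u v = n}

/-- A lattice (d,k)-polytope: convex hull of a nonempty finite set of points in {0,…,k}^d. -/
def IsLatticePolytope (d k : ℕ) (P : Set (Fin d → ℝ)) : Prop :=
  ∃ V : Finset (Fin d → ℝ), V.Nonempty ∧
    (∀ x ∈ V, ∀ i, ∃ m : ℕ, m ≤ k ∧ x i = (m : ℝ)) ∧
    P = convexHull ℝ (V : Set (Fin d → ℝ))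

/-- δ(d,k): the largest edge-graph diameter of a lattice (d,k)-polytope. -/
noncomputable def deltaLP (d k : ℕ) : ℕ :=
  sSup {n : ℕ | ∃ P : Set (Fin d → ℝ), IsLatticePolytope d k P ∧ polyDiam d P = n}



section NaddefAux

noncomputable def dotp {d : ℕ} (p : Fin d → ℝ) : (Fin d → ℝ) →ₗ[ℝ] ℝ where
  toFun x := ∑ i, p i * x i
  map_add' x y := by simp [mul_add, Finset.sum_add_distrib]
  map_smul' r x := by
    simp only [smul_eq_mul, RingHom.id_apply, Pi.smul_apply, Finset.mul_sum]
    exact Finset.sum_congr rfl fun i _ => by ring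

lemma dotp_apply {d : ℕ} (p x : Fin d → ℝ) : dotp p x = ∑ i, p i * x i := rfl

lemma dotp_comm {d : ℕ} (p x : Fin d → ℝ) : dotp p x = dotp x p := by
  rw [dotp_apply, dotp_apply]
  exact Finset.sum_congr rfl fun i _ => mul_comm _ _

lemma dotp_self_pos {d : ℕ} {a : Fin d → ℝ} (ha : a ≠ 0) : 0 < dotp a a := by
  rw [dotp_apply]
  have h : ∃ i, a i ≠ 0 := by
    by_contra h
    push_neg at h
    exact ha (funext h)
  obtain ⟨i, hi⟩ := h
  exact Finset.sum_pos' (fun j _ => mul_self_nonneg _)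
    ⟨i, Finset.mem_univ i, mul_self_pos.2 hi⟩

lemma dotp_left_comb {d : ℕ} (x y : ℝ) (a b w : Fin d → ℝ) :
    dotp (x • a + y • b) w = x * dotp a w + y * dotp b w := by
  rw [dotp_comm, map_add, map_smul, map_smul, smul_eq_mul, smul_eq_mul,
    dotp_comm w a, dotp_comm w b]

lemma dotp_left_sub {d : ℕ} (a b w : Fin d → ℝ) :
    dotp (a - b) w = dotp a w - dotp b w := by
  rw [dotp_comm, map_sub, dotp_comm w a, dotp_comm w b]

lemma exists_eta {d : ℕ} (a b : Fin d → ℝ)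
    (hli : ∀ r s : ℝ, r • a + s • b = 0 → r = 0 ∧ s = 0) (s t : ℝ) :
    ∃ η : Fin d → ℝ, dotp η a = s ∧ dotp η b = t := by
  set A := dotp a a with hA
  set B2 := dotp a b with hB2
  set C := dotp b b with hC
  have ha0 : a ≠ 0 := by
    intro h
    have := hli 1 0 (by simp [h])
    exact one_ne_zero this.1
  have hApos : 0 < A := dotp_self_pos ha0
  have hq0 : A • b - B2 • a ≠ 0 := by
    intro h
    have : (-B2) • a + A • b = 0 := by
      rw [← h]; module
    exact absurd (hli _ _ this).2 (ne_of_gt hApos)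
  have hqq : 0 < dotp (A • b - B2 • a) (A • b - B2 • a) := dotp_self_pos hq0
  have hexp : dotp (A • b - B2 • a) (A • b - B2 • a) = A * (A * C - B2 * B2) := by
    rw [sub_eq_add_neg, ← neg_smul, dotp_left_comb, map_add, map_add, map_smul, map_smul,
      map_smul, map_smul]
    simp only [smul_eq_mul]
    rw [← hC, ← hB2, dotp_comm b a, ← hB2, ← hA]
    ring
  have hdet : 0 < A * C - B2 * B2 := by
    by_contra h
    push_neg at h
    nlinarith
  set det := A * C - B2 * B2
  refine ⟨((s * C - t * B2) / det) • a + ((t * A - s * B2) / det) • b, ?_, ?_⟩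
  · rw [dotp_left_comb, ← hA, dotp_comm b a, ← hB2]
    field_simp
    ring
  · rw [dotp_left_comb, ← hB2, ← hC]
    field_simp
    ring

lemma exists_dotp_eq {d : ℕ} (f : (Fin d → ℝ) →L[ℝ] ℝ) :
    ∃ p : Fin d → ℝ, ∀ x, dotp p x = f x := by
  refine ⟨fun i => f (Pi.single i 1), fun x => ?_⟩
  rw [dotp_apply]
  conv_rhs => rw [pi_eq_sum_univ x]
  rw [map_sum]
  refine Finset.sum_congr rfl fun i _ => ?_
  have hs : (Pi.single i 1 : Fin d → ℝ) = fun j => if i = j then 1 else 0 := by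
    ext j; simp [Pi.single_apply, eq_comm]
  rw [map_smul, hs, smul_eq_mul, mul_comm]

lemma hull_le {d : ℕ} {V : Finset (Fin d → ℝ)} {g : (Fin d → ℝ) →ₗ[ℝ] ℝ} {M : ℝ}
    (h : ∀ v ∈ V, g v ≤ M) {x} (hx : x ∈ convexHull ℝ (V : Set (Fin d → ℝ))) : g x ≤ M :=
  convexHull_min (fun v hv => h v hv) (convex_halfSpace_le (LinearMap.isLinear g) M) hx

lemma hull_ge {d : ℕ} {V : Finset (Fin d → ℝ)} {g : (Fin d → ℝ) →ₗ[ℝ] ℝ} {M : ℝ}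
    (h : ∀ v ∈ V, M ≤ g v) {x} (hx : x ∈ convexHull ℝ (V : Set (Fin d → ℝ))) : M ≤ g x :=
  convexHull_min (fun v hv => h v hv) (convex_halfSpace_ge (LinearMap.isLinear g) M) hx

lemma face_mem {d : ℕ} {V : Finset (Fin d → ℝ)} {g : (Fin d → ℝ) →ₗ[ℝ] ℝ} {M : ℝ}
    (hle : ∀ v ∈ V, g v ≤ M) {x} (hx : x ∈ convexHull ℝ (V : Set (Fin d → ℝ))) (hxM : g x = M) :
    x ∈ convexHull ℝ ((V.filter (fun v => g v = M)) : Set (Fin d → ℝ)) := by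
  rw [Finset.convexHull_eq] at hx
  obtain ⟨w, hw0, hw1, hwx⟩ := hx
  rw [Finset.centerMass_eq_of_sum_1 _ _ hw1] at hwx
  have hgx : ∑ v ∈ V, w v * g v = M := by
    rw [← hxM, ← hwx, map_sum]
    exact Finset.sum_congr rfl fun v _ => by simp
  have hzero : ∀ v ∈ V, w v * (M - g v) = 0 := by
    rw [← Finset.sum_eq_zero_iff_of_nonneg
      (fun v hv => mul_nonneg (hw0 v hv) (sub_nonneg.2 (hle v hv)))]
    have : ∑ v ∈ V, w v * (M - g v) = (∑ v ∈ V, w v) * M - ∑ v ∈ V, w v * g v := by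
      rw [Finset.sum_mul, ← Finset.sum_sub_distrib]
      exact Finset.sum_congr rfl fun v _ => by ring
    rw [this, hw1, hgx]; ring
  have key : ∀ v ∈ V, w v ≠ 0 → g v = M := by
    intro v hv hw
    rcases mul_eq_zero.1 (hzero v hv) with h | h
    · exact absurd h hw
    · linarith [sub_eq_zero.1 h]
  have hsum : ∑ v ∈ V.filter (fun v => g v = M), w v = 1 := by
    rw [Finset.sum_filter_of_ne key, hw1]
  have hxx : ∑ v ∈ V.filter (fun v => g v = M), w v • v = x := by
    rw [← hwx]
    exact Finset.sum_filter_of_ne (fun v hv h => key v hv (fun h0 => by simp [h0] at h))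
  rw [← hxx]
  have := Finset.centerMass_mem_convexHull (V.filter (fun v => g v = M))
    (fun v hv => hw0 v (Finset.mem_filter.1 hv).1) (by rw [hsum]; norm_num)
    (fun v hv => Finset.mem_coe.2 hv)
  rwa [Finset.centerMass_eq_of_sum_1 _ _ hsum] at this

lemma face_isExtreme {d : ℕ} {V : Finset (Fin d → ℝ)} {g : (Fin d → ℝ) →ₗ[ℝ] ℝ} {M : ℝ}
    (hle : ∀ v ∈ V, g v ≤ M) :
    IsExtreme ℝ (convexHull ℝ (V : Set (Fin d → ℝ)))
      (convexHull ℝ ((V.filter (fun v => g v = M)) : Set (Fin d → ℝ))) := by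
  constructor
  · exact convexHull_mono (by exact_mod_cast Finset.filter_subset _ _)
  · rintro x₁ hx₁ x₂ hx₂ x hx hxseg
    obtain ⟨a, b, ha, hb, hab, rfl⟩ := hxseg
    have hfM : ∀ v ∈ V.filter (fun v => g v = M), g v = M := fun v hv => (Finset.mem_filter.1 hv).2
    have hgx : g (a • x₁ + b • x₂) = M :=
      le_antisymm (hull_le (fun v hv => le_of_eq (hfM v hv)) hx)
        (hull_ge (fun v hv => ge_of_eq (hfM v hv)) hx)
    have h1 : g x₁ ≤ M := hull_le hle hx₁
    have h2 : g x₂ ≤ M := hull_le hle hx₂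
    have hM : a * M + b * M = M := by rw [← add_mul, hab, one_mul]
    have hgx' : a * g x₁ + b * g x₂ = M := by
      rw [← hgx]; simp [map_add, map_smul]
    have e1 : g x₁ = M := by
      by_contra h
      have h1' : g x₁ < M := lt_of_le_of_ne h1 h
      nlinarith [mul_lt_mul_of_pos_left h1' ha, mul_le_mul_of_nonneg_left h2 hb.le]
    have e2 : g x₂ = M := by nlinarith [e1]
    exact face_mem hle hx₁ e1

lemma unique_argmax_extreme {d : ℕ} {V : Finset (Fin d → ℝ)} {g : (Fin d → ℝ) →ₗ[ℝ] ℝ}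
    {x₀ : Fin d → ℝ} (hx₀ : x₀ ∈ V) (hmax : ∀ v ∈ V, v ≠ x₀ → g v < g x₀) :
    x₀ ∈ (convexHull ℝ (V : Set (Fin d → ℝ))).extremePoints ℝ := by
  have hle : ∀ v ∈ V, g v ≤ g x₀ := fun v hv => by
    rcases eq_or_ne v x₀ with rfl | h
    · exact le_refl _
    · exact (hmax v hv h).le
  have hfilter : V.filter (fun v => g v = g x₀) = {x₀} := by
    apply Finset.eq_singleton_iff_unique_mem.2
    exact ⟨Finset.mem_filter.2 ⟨hx₀, rfl⟩, fun v hv => by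
      rcases Finset.mem_filter.1 hv with ⟨hv1, hv2⟩
      by_contra h
      exact absurd hv2 (ne_of_lt (hmax v hv1 h))⟩
  refine ⟨subset_convexHull ℝ _ hx₀, ?_⟩
  intro x₁ hx₁ x₂ hx₂ hseg
  have hext := face_isExtreme (V := V) (g := g) (M := g x₀) hle
  rw [hfilter] at hext
  simp only [Finset.coe_singleton, convexHull_singleton] at hext
  have := hext.2 hx₁ hx₂ (mem_singleton _) hseg
  exact this

lemma hull_erase {d : ℕ} {V : Finset (Fin d → ℝ)} {v₀ : Fin d → ℝ}
    (hne : v₀ ∉ (convexHull ℝ (V : Set (Fin d → ℝ))).extremePoints ℝ) :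
    convexHull ℝ ((V.erase v₀ : Finset (Fin d → ℝ)) : Set (Fin d → ℝ))
      = convexHull ℝ (V : Set (Fin d → ℝ)) := by
  apply Set.Subset.antisymm
  · exact convexHull_mono (by exact_mod_cast Finset.erase_subset _ _)
  · have hcomp : IsCompact (convexHull ℝ (V : Set (Fin d → ℝ))) :=
      V.finite_toSet.isCompact_convexHull ℝ
    have hconv : Convex ℝ (convexHull ℝ (V : Set (Fin d → ℝ))) := convex_convexHull _ _
    have hKM := closure_convexHull_extremePoints hcomp hconv
    have hsub : (convexHull ℝ (V : Set (Fin d → ℝ))).extremePoints ℝ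
        ⊆ ((V.erase v₀ : Finset (Fin d → ℝ)) : Set (Fin d → ℝ)) := by
      intro x hx
      have hxV : x ∈ (V : Set (Fin d → ℝ)) := extremePoints_convexHull_subset hx
      have hxne : x ≠ v₀ := fun h => hne (h ▸ hx)
      exact Finset.mem_coe.2 (Finset.mem_erase.2 ⟨hxne, Finset.mem_coe.1 hxV⟩)
    calc convexHull ℝ (V : Set (Fin d → ℝ))
        = closure (convexHull ℝ ((convexHull ℝ (V : Set (Fin d → ℝ))).extremePoints ℝ)) :=
          hKM.symm
      _ ⊆ closure (convexHull ℝ ((V.erase v₀ : Finset (Fin d → ℝ)) : Set (Fin d → ℝ))) :=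
          closure_mono (convexHull_mono hsub)
      _ = convexHull ℝ ((V.erase v₀ : Finset (Fin d → ℝ)) : Set (Fin d → ℝ)) :=
          IsClosed.closure_eq (((V.erase v₀).finite_toSet.isCompact_convexHull ℝ).isClosed)

lemma extreme_not_mem_erase {d : ℕ} {V : Finset (Fin d → ℝ)} {u : Fin d → ℝ}
    (hu : u ∈ (convexHull ℝ (V : Set (Fin d → ℝ))).extremePoints ℝ) :
    u ∉ convexHull ℝ ((V.erase u : Finset (Fin d → ℝ)) : Set (Fin d → ℝ)) := by
  intro hmem
  have hsub : convexHull ℝ ((V.erase u : Finset (Fin d → ℝ)) : Set (Fin d → ℝ))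
      ⊆ convexHull ℝ (V : Set (Fin d → ℝ)) :=
    convexHull_mono (by exact_mod_cast Finset.erase_subset _ _)
  have : u ∈ (convexHull ℝ ((V.erase u : Finset (Fin d → ℝ)) : Set (Fin d → ℝ))).extremePoints ℝ :=
    inter_extremePoints_subset_extremePoints_of_subset hsub ⟨hmem, hu⟩
  have := extremePoints_convexHull_subset this
  simp at this

lemma exists_exposing {d : ℕ} {V : Finset (Fin d → ℝ)} {u : Fin d → ℝ}
    (hu : u ∈ (convexHull ℝ (V : Set (Fin d → ℝ))).extremePoints ℝ) :
    ∃ p : Fin d → ℝ, ∀ v ∈ V, v ≠ u → dotp p u < dotp p v := by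
  obtain ⟨f, r, hur, hr⟩ := geometric_hahn_banach_point_closed
    (convex_convexHull ℝ _) (((V.erase u).finite_toSet.isCompact_convexHull ℝ).isClosed)
    (extreme_not_mem_erase hu)
  obtain ⟨p, hp⟩ := exists_dotp_eq f
  refine ⟨p, fun v hv hvu => ?_⟩
  rw [hp, hp]
  exact lt_trans hur (hr v (subset_convexHull ℝ _
    (Finset.mem_coe.2 (Finset.mem_erase.2 ⟨hvu, hv⟩))))

lemma exists_good_functional {d : ℕ} {V : Finset (Fin d → ℝ)} {u : Fin d → ℝ}
    (c : (Fin d → ℝ) →ₗ[ℝ] ℝ)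
    (hu : u ∈ (convexHull ℝ (V : Set (Fin d → ℝ))).extremePoints ℝ)
    (η : Fin d → ℝ) (hη : ¬∃ α β : ℝ, ∀ v ∈ V, dotp η v = α * c v + β) :
    ∃ p : Fin d → ℝ, (∀ v ∈ V, v ≠ u → dotp p u < dotp p v) ∧
      ¬∃ α β : ℝ, ∀ v ∈ V, dotp p v = α * c v + β := by
  set B : Submodule ℝ (Fin d → ℝ) :=
    { carrier := {p | ∃ α β : ℝ, ∀ v ∈ V, dotp p v = α * c v + β}
      add_mem' := by
        rintro p q ⟨α, β, hp⟩ ⟨α', β', hq⟩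
        exact ⟨α + α', β + β', fun v hv => by
          rw [dotp_apply]
          have h1 := hp v hv; have h2 := hq v hv
          rw [dotp_apply] at h1 h2
          simp only [Pi.add_apply, add_mul]
          rw [Finset.sum_add_distrib, h1, h2]; ring⟩
      zero_mem' := ⟨0, 0, fun v hv => by rw [dotp_apply]; simp⟩
      smul_mem' := by
        rintro r p ⟨α, β, hp⟩
        exact ⟨r * α, r * β, fun v hv => by
          have h1 := hp v hv
          rw [dotp_apply] at h1 ⊢
          simp only [Pi.smul_apply, smul_eq_mul]
          rw [show ∑ i, r * p i * v i = r * ∑ i, p i * v i by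
            rw [Finset.mul_sum]; exact Finset.sum_congr rfl fun i _ => by ring, h1]
          ring⟩ }
  by_contra hcon
  push_neg at hcon
  have hOB : {p : Fin d → ℝ | ∀ v ∈ V, v ≠ u → dotp p u < dotp p v} ⊆ (B : Set (Fin d → ℝ)) := by
    intro p hp
    obtain ⟨α, β, h⟩ := hcon p hp
    exact ⟨α, β, h⟩
  have hOopen : IsOpen {p : Fin d → ℝ | ∀ v ∈ V, v ≠ u → dotp p u < dotp p v} := by
    have : {p : Fin d → ℝ | ∀ v ∈ V, v ≠ u → dotp p u < dotp p v}
        = ⋂ v ∈ V.filter (· ≠ u), {p | dotp p u < dotp p v} := by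
      ext p
      simp only [Set.mem_setOf_eq, Set.mem_iInter, Finset.mem_filter]
      constructor
      · rintro h v ⟨hv, hvu⟩; exact h v hv hvu
      · intro h v hv hvu; exact h v ⟨hv, hvu⟩
    rw [this]
    refine isOpen_biInter_finset fun v _ => ?_
    have hc : ∀ w : Fin d → ℝ, Continuous fun p : Fin d → ℝ => dotp p w := by
      intro w
      simp only [dotp_apply]
      exact continuous_finset_sum _ fun i _ => (continuous_apply i).mul continuous_const
    exact isOpen_lt (hc u) (hc v)
  have hne : ∃ p, p ∈ {p : Fin d → ℝ | ∀ v ∈ V, v ≠ u → dotp p u < dotp p v} := by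
    obtain ⟨p, hp⟩ := exists_exposing hu
    exact ⟨p, hp⟩
  obtain ⟨p₀, hp₀⟩ := hne
  have hint : (interior (B : Set (Fin d → ℝ))).Nonempty :=
    ⟨p₀, interior_mono hOB (by rwa [hOopen.interior_eq])⟩
  have hBtop : B = ⊤ := Submodule.eq_top_of_nonempty_interior' B hint
  have : η ∈ B := hBtop ▸ Submodule.mem_top
  exact hη this

lemma triple_li {d : ℕ} {P : Set (Fin d → ℝ)} {v0 v1 v2 : Fin d → ℝ}
    (h0 : v0 ∈ P.extremePoints ℝ) (h1 : v1 ∈ P.extremePoints ℝ) (h2 : v2 ∈ P.extremePoints ℝ)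
    (h01 : v0 ≠ v1) (h02 : v0 ≠ v2) (h12 : v1 ≠ v2) :
    ∀ r s : ℝ, r • (v1 - v0) + s • (v2 - v0) = 0 → r = 0 ∧ s = 0 := by
  intro r s hrs
  by_contra hcon
  have hs : s ≠ 0 ∨ (s = 0 ∧ r ≠ 0) := by tauto
  rcases hs with hs | ⟨rfl, hr⟩
  swap
  · apply h01
    have : r • (v1 - v0) = 0 := by simpa using hrs
    have := smul_eq_zero.1 this
    rcases this with h | h
    · exact absurd h hr
    · have := sub_eq_zero.1 h; exact this.symm
  · set t : ℝ := -r / s with ht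
    have hb : v2 - v0 = t • (v1 - v0) := by
      have h1' : s • (v2 - v0) = (-r) • (v1 - v0) := by
        rw [neg_smul, eq_neg_iff_add_eq_zero, add_comm]
        exact hrs
      calc v2 - v0 = s⁻¹ • (s • (v2 - v0)) := by rw [smul_smul, inv_mul_cancel₀ hs, one_smul]
        _ = s⁻¹ • ((-r) • (v1 - v0)) := by rw [h1']
        _ = t • (v1 - v0) := by rw [smul_smul, ht]; ring_nf
    have hv2' : v0 + t • (v1 - v0) = v2 := by rw [← hb]; module
    have ht0 : t ≠ 0 := by
      intro h; rw [h, zero_smul] at hb; exact h02 (sub_eq_zero.1 hb).symm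
    have ht1 : t ≠ 1 := by
      intro h; rw [h, one_smul] at hb
      exact h12 (by have := sub_left_injective.eq_iff.1 hb; exact this.symm)
    rcases lt_trichotomy t 0 with htneg | h | htpos
    · -- v0 ∈ openSegment v1 v2
      set μ : ℝ := -t / (1 - t) with hμ
      set ν : ℝ := 1 / (1 - t) with hν
      have h1t : (0:ℝ) < 1 - t := by linarith
      have hμpos : 0 < μ := div_pos (by linarith) (by linarith)
      have hνpos : 0 < ν := div_pos one_pos (by linarith)
      have hsum : μ + ν = 1 := by rw [hμ, hν]; field_simp; ring
      have hμν : μ + ν * t = 0 := by rw [hμ, hν]; field_simp; ring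
      have hν1 : ν * (1 - t) = 1 := by rw [hν]; field_simp
      have hmem : v0 ∈ openSegment ℝ v1 v2 := by
        refine ⟨μ, ν, hμpos, hνpos, hsum, ?_⟩
        rw [← hv2']
        have expand : μ • v1 + ν • (v0 + t • (v1 - v0)) = (μ + ν * t) • v1 + (ν * (1 - t)) • v0 := by
          module
        rw [expand, hμν, hν1]; simp
      have := h0.2 h1.1 h2.1 hmem
      exact h01 this.symm
    · exact ht0 h
    · rcases lt_trichotomy t 1 with htlt | h | htgt
      · -- v2 ∈ openSegment v0 v1
        have hmem : v2 ∈ openSegment ℝ v0 v1 := by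
          refine ⟨1 - t, t, by linarith, htpos, by ring, ?_⟩
          rw [← hv2']; module
        have := h2.2 h0.1 h1.1 hmem
        exact h02 this
      · exact ht1 h
      · -- v1 ∈ openSegment v0 v2
        have hmem : v1 ∈ openSegment ℝ v0 v2 := by
          refine ⟨1 - 1/t, 1/t, by
            have : 1/t < 1 := by rw [div_lt_one (by linarith)]; linarith
            linarith, by positivity, by ring, ?_⟩
          have h2' : (1/t) • (v2 - v0) = v1 - v0 := by
            rw [hb, smul_smul, one_div, inv_mul_cancel₀ ht0, one_smul]
          calc (1 - 1/t) • v0 + (1/t) • v2 = v0 + (1/t) • (v2 - v0) := by module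
            _ = v0 + (v1 - v0) := by rw [h2']
            _ = v1 := by module
        have := h1.2 h0.1 h2.1 hmem
        exact h01 this

lemma improving_edge_aux {d : ℕ} (N : ℕ) : ∀ (V : Finset (Fin d → ℝ)), V.card ≤ N →
    ∀ (u y : Fin d → ℝ) (c : (Fin d → ℝ) →ₗ[ℝ] ℝ),
    u ∈ (convexHull ℝ (V : Set (Fin d → ℝ))).extremePoints ℝ →
    y ∈ convexHull ℝ (V : Set (Fin d → ℝ)) → c u < c y →
    ∃ w ∈ (convexHull ℝ (V : Set (Fin d → ℝ))).extremePoints ℝ, c u < c w ∧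
      IsExtreme ℝ (convexHull ℝ (V : Set (Fin d → ℝ))) (segment ℝ u w) := by
  induction N with
  | zero =>
    intro V hV u y c hu hy hcy
    have : V = ∅ := Finset.card_eq_zero.1 (Nat.le_zero.1 hV)
    subst this
    simp at hy
  | succ N IH =>
    intro V hV u y c hu hy hcy
    -- find witness in V
    have hwit : ∃ y' ∈ V, c u < c y' := by
      by_contra hcon
      push_neg at hcon
      exact absurd (hull_le hcon hy) (not_le.2 hcy)
    obtain ⟨y', hy'V, hy'c⟩ := hwit
    by_cases hall : ∀ v ∈ V, v ∈ (convexHull ℝ (V : Set (Fin d → ℝ))).extremePoints ℝ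
    · -- all vertices extreme
      have huV : u ∈ V := extremePoints_convexHull_subset hu
      have huy' : u ≠ y' := fun h => absurd (h ▸ hy'c) (lt_irrefl _)
      by_cases hcard : V.card ≤ 2
      · -- V = {u, y'}
        have hVeq : V = {u, y'} := by
          apply (Finset.eq_of_subset_of_card_le _ _).symm
          · intro x hx
            rcases Finset.mem_insert.1 hx with rfl | hx
            · exact huV
            · rwa [Finset.mem_singleton.1 hx]
          · calc V.card ≤ 2 := hcard
              _ = ({u, y'} : Finset (Fin d → ℝ)).card := by
                rw [Finset.card_insert_of_notMem (by simpa using huy'), Finset.card_singleton]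
        have hPseg : convexHull ℝ (V : Set (Fin d → ℝ)) = segment ℝ u y' := by
          rw [hVeq]
          push_cast
          exact convexHull_pair u y'
        refine ⟨y', hall y' hy'V, hy'c, ?_⟩
        rw [show segment ℝ u y' = convexHull ℝ (V : Set (Fin d → ℝ)) from hPseg.symm]
      · -- |V| ≥ 3
        push_neg at hcard
        have herase : 1 < (V.erase u).card := by
          have := Finset.card_erase_of_mem huV
          omega
        obtain ⟨v1, hv1, v2, hv2, hv12⟩ := Finset.one_lt_card.1 herase
        have hv1V := Finset.mem_of_mem_erase hv1
        have hv2V := Finset.mem_of_mem_erase hv2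
        have hv1u : v1 ≠ u := Finset.ne_of_mem_erase hv1
        have hv2u : v2 ≠ u := Finset.ne_of_mem_erase hv2
        have hli := triple_li hu (hall v1 hv1V) (hall v2 hv2V) hv1u.symm hv2u.symm hv12
        set Δ1 := c v1 - c u with hΔ1
        set Δ2 := c v2 - c u with hΔ2
        -- build η not representable as α c + β on V
        have hηex : ∃ η : Fin d → ℝ, ¬∃ α β : ℝ, ∀ v ∈ V, dotp η v = α * c v + β := by
          by_cases hΔ : Δ1 = 0 ∧ Δ2 = 0
          · obtain ⟨η, hη1, hη2⟩ := exists_eta _ _ hli 1 0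
            refine ⟨η, ?_⟩
            rintro ⟨α, β, hαβ⟩
            have h1 : dotp η (v1 - u) = dotp η v1 - dotp η u := map_sub _ _ _
            rw [hη1, hαβ v1 hv1V, hαβ u huV] at h1
            have h5 : (1:ℝ) = α * Δ1 := by rw [hΔ1]; linarith
            rw [hΔ.1, mul_zero] at h5
            exact one_ne_zero h5
          · obtain ⟨η, hη1, hη2⟩ := exists_eta _ _ hli (-Δ2) Δ1
            refine ⟨η, ?_⟩
            rintro ⟨α, β, hαβ⟩
            have h1 : dotp η (v1 - u) = dotp η v1 - dotp η u := map_sub _ _ _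
            have h2 : dotp η (v2 - u) = dotp η v2 - dotp η u := map_sub _ _ _
            rw [hη1, hαβ v1 hv1V, hαβ u huV] at h1
            rw [hη2, hαβ v2 hv2V, hαβ u huV] at h2
            have e1 : -Δ2 = α * Δ1 := by rw [hΔ1]; linarith
            have e2 : Δ1 = α * Δ2 := by rw [hΔ2]; linarith
            have k1 : Δ1*Δ1 = α*(Δ2*Δ1) := by
              calc Δ1*Δ1 = (α*Δ2)*Δ1 := by rw [← e2]
                _ = α*(Δ2*Δ1) := by ring
            have k2 : Δ2*Δ2 = -(α*(Δ2*Δ1)) := by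
              have : Δ2 = -(α*Δ1) := by linarith [e1]
              calc Δ2*Δ2 = (-(α*Δ1))*Δ2 := by rw [← this]
                _ = -(α*(Δ2*Δ1)) := by ring
            have hsum0 : Δ1*Δ1 + Δ2*Δ2 = 0 := by linarith
            have hd1 : Δ1 = 0 := by
              have : Δ1*Δ1 = 0 := by nlinarith [mul_self_nonneg Δ2, mul_self_nonneg Δ1]
              exact mul_self_eq_zero.1 this
            have hd2 : Δ2 = 0 := by
              have : Δ2*Δ2 = 0 := by nlinarith [mul_self_nonneg Δ1, mul_self_nonneg Δ2]
              exact mul_self_eq_zero.1 this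
            exact hΔ ⟨hd1, hd2⟩
        obtain ⟨η, hη⟩ := hηex
        obtain ⟨p, hexp, hnb⟩ := exists_good_functional c hu η hη
        classical
        set S := V.filter (fun v => c u < c v) with hSdef
        have hSne : S.Nonempty := ⟨y', Finset.mem_filter.2 ⟨hy'V, hy'c⟩⟩
        obtain ⟨vm, hvmS, hvmmin⟩ :=
          S.exists_min_image (fun v => (dotp p v - dotp p u) / (c v - c u)) hSne
        have hvmV : vm ∈ V := (Finset.mem_filter.1 hvmS).1
        have hvmc : c u < c vm := (Finset.mem_filter.1 hvmS).2
        have hvmu : vm ≠ u := fun h => absurd (h ▸ hvmc) (lt_irrefl _)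
        obtain ⟨sm, hsmdef⟩ : ∃ sm : ℝ, sm = (dotp p vm - dotp p u) / (c vm - c u) := ⟨_, rfl⟩
        have hsmpos : 0 < sm := by
          rw [hsmdef]
          exact div_pos (sub_pos.2 (hexp vm hvmV hvmu)) (sub_pos.2 hvmc)
        have hsmle : ∀ v ∈ S, sm ≤ (dotp p v - dotp p u) / (c v - c u) := by
          intro v hv
          rw [hsmdef]
          exact hvmmin v hv
        obtain ⟨g, hgapp⟩ : ∃ g : (Fin d → ℝ) →ₗ[ℝ] ℝ, ∀ x, g x = sm * c x - dotp p x :=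
          ⟨sm • c - dotp p, fun x => by simp⟩
        have hkey : ∀ v ∈ S, (c v - c u) * ((dotp p v - dotp p u) / (c v - c u))
            = dotp p v - dotp p u := by
          intro v hv
          have hne : c v - c u ≠ 0 := ne_of_gt (sub_pos.2 (Finset.mem_filter.1 hv).2)
          field_simp
        have hsmeq : (c vm - c u) * sm = dotp p vm - dotp p u := by
          have hne : c vm - c u ≠ 0 := ne_of_gt (sub_pos.2 hvmc)
          rw [hsmdef]
          field_simp
        have hle : ∀ v ∈ V, g v ≤ g u := by
          intro v hv
          rcases eq_or_ne v u with rfl | hvu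
          · exact le_refl _
          by_cases hvS : v ∈ S
          · have h1 := hkey v hvS
            have h2 := hsmle v hvS
            have h3 : 0 < c v - c u := sub_pos.2 (Finset.mem_filter.1 hvS).2
            rw [hgapp, hgapp]
            nlinarith [mul_le_mul_of_nonneg_left h2 h3.le]
          · have h4 : c v ≤ c u := by
              by_contra h
              exact hvS (Finset.mem_filter.2 ⟨hv, not_le.1 h⟩)
            have h5 : dotp p u < dotp p v := hexp v hv hvu
            rw [hgapp, hgapp]
            nlinarith
        have huVg : u ∈ V.filter (fun v => g v = g u) := Finset.mem_filter.2 ⟨huV, rfl⟩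
        have hvmVg : vm ∈ V.filter (fun v => g v = g u) := by
          refine Finset.mem_filter.2 ⟨hvmV, ?_⟩
          rw [hgapp, hgapp]
          nlinarith
        have hproper : ∃ v ∈ V, v ∉ V.filter (fun v => g v = g u) := by
          by_contra hcon
          push_neg at hcon
          refine hnb ⟨sm, -(g u), fun v hv => ?_⟩
          have h6 := (Finset.mem_filter.1 (hcon v hv)).2
          have h7 := hgapp v
          linarith
        have hext : IsExtreme ℝ (convexHull ℝ (V : Set (Fin d → ℝ)))
            (convexHull ℝ ((V.filter (fun v => g v = g u)) : Set (Fin d → ℝ))) :=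
          face_isExtreme hle
        have hcardlt : (V.filter (fun v => g v = g u)).card ≤ N := by
          obtain ⟨v, hvV, hvn⟩ := hproper
          have hsub : V.filter (fun v => g v = g u) ⊆ V := Finset.filter_subset _ _
          have : (V.filter (fun v => g v = g u)).card < V.card :=
            Finset.card_lt_card ⟨hsub, fun h => hvn (h hvV)⟩
          omega
        have huVg' : u ∈ (convexHull ℝ ((V.filter (fun v => g v = g u)) : Set (Fin d → ℝ))).extremePoints ℝ := by
          refine ⟨subset_convexHull ℝ _ huVg, ?_⟩
          intro x₁ hx₁ x₂ hx₂ hseg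
          exact hu.2 (hext.1 hx₁) (hext.1 hx₂) hseg
        obtain ⟨w, hwext, hwc, hwedge⟩ := IH _ hcardlt u vm c huVg'
          (subset_convexHull ℝ _ hvmVg) hvmc
        exact ⟨w, hext.extremePoints_subset_extremePoints hwext, hwc, hext.trans hwedge⟩
    · -- some vertex not extreme: drop it
      push_neg at hall
      obtain ⟨v₀, hv₀V, hv₀⟩ := hall
      have heq := hull_erase hv₀
      have hcard : (V.erase v₀).card ≤ N := by
        have := Finset.card_erase_of_mem hv₀V
        have hpos : 0 < V.card := Finset.card_pos.2 ⟨v₀, hv₀V⟩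
        omega
      obtain ⟨w, hw1, hw2, hw3⟩ := IH (V.erase v₀) hcard u y c (by rwa [heq]) (by rwa [heq]) hcy
      exact ⟨w, by rwa [heq] at hw1, hw2, by rwa [heq] at hw3⟩

noncomputable def Ham {d : ℕ} (u v : Fin d → ℝ) : ℕ :=
  (Finset.univ.filter (fun i => u i ≠ v i)).card

lemma ham_le {d : ℕ} (u v : Fin d → ℝ) : Ham u v ≤ d := by
  classical
  calc (Finset.univ.filter (fun i => u i ≠ v i)).card ≤ (Finset.univ : Finset (Fin d)).card :=
        Finset.card_filter_le _ _
    _ = d := Finset.card_univ.trans (Fintype.card_fin d)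

lemma ham_eq_zero {d : ℕ} {u v : Fin d → ℝ} (h : Ham u v = 0) : u = v := by
  classical
  rw [Ham, Finset.card_eq_zero, Finset.filter_eq_empty_iff] at h
  funext i
  have := h (Finset.mem_univ i)
  exact not_ne_iff.1 this

lemma ham_pos {d : ℕ} {u v : Fin d → ℝ} (h : u ≠ v) : 0 < Ham u v := by
  rcases Nat.eq_zero_or_pos (Ham u v) with h0 | h0
  · exact absurd (ham_eq_zero h0) h
  · exact h0

lemma ham_triangle {d : ℕ} (u w v : Fin d → ℝ) : Ham u v ≤ Ham u w + Ham w v := by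
  classical
  rw [Ham, Ham, Ham]
  calc (Finset.univ.filter (fun i => u i ≠ v i)).card
      ≤ ((Finset.univ.filter (fun i => u i ≠ w i)) ∪ (Finset.univ.filter (fun i => w i ≠ v i))).card := by
        apply Finset.card_le_card
        intro i hi
        have hne := (Finset.mem_filter.1 hi).2
        rw [Finset.mem_union, Finset.mem_filter, Finset.mem_filter]
        by_cases h : u i = w i
        · exact Or.inr ⟨Finset.mem_univ i, fun hwv => hne (h.trans hwv)⟩
        · exact Or.inl ⟨Finset.mem_univ i, h⟩
    _ ≤ _ := Finset.card_union_le _ _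

lemma ham_symm {d : ℕ} (u v : Fin d → ℝ) : Ham u v = Ham v u := by
  classical
  rw [Ham, Ham]
  congr 1
  apply Finset.filter_congr
  intro i _
  simp [ne_comm]

lemma cdiff {d : ℕ} {x v : Fin d → ℝ} (hx : ∀ i, x i = 0 ∨ x i = 1)
    (hv : ∀ i, v i = 0 ∨ v i = 1) :
    dotp (fun i => 2 * v i - 1) v - dotp (fun i => 2 * v i - 1) x = (Ham x v : ℝ) := by
  classical
  rw [dotp_apply, dotp_apply, ← Finset.sum_sub_distrib, Ham, Finset.card_eq_sum_ones,
    Nat.cast_sum, Finset.sum_filter]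
  apply Finset.sum_congr rfl
  intro i _
  rcases hx i with h1 | h1 <;> rcases hv i with h2 | h2 <;>
    simp [h1, h2] <;> norm_num

lemma endpoint_extreme {d : ℕ} {a b : Fin d → ℝ} (hab : a ≠ b) :
    a ∈ (segment ℝ a b).extremePoints ℝ := by
  refine ⟨left_mem_segment ℝ a b, ?_⟩
  intro x₁ hx₁ x₂ hx₂ hseg
  rw [segment_eq_image'] at hx₁ hx₂
  obtain ⟨s, hs, rfl⟩ := hx₁
  obtain ⟨t, ht, rfl⟩ := hx₂
  obtain ⟨r₁, r₂, hr₁, hr₂, hr, heq⟩ := hseg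
  have hba : b - a ≠ 0 := sub_ne_zero.2 (Ne.symm hab)
  have hcomb : (r₁ * s + r₂ * t) • (b - a) = 0 := by
    have h1 : r₁ • (a + s • (b - a)) + r₂ • (a + t • (b - a)) = a := heq
    have h2 : (r₁ + r₂) • a + (r₁ * s + r₂ * t) • (b - a)
        = r₁ • (a + s • (b - a)) + r₂ • (a + t • (b - a)) := by module
    have h3 := h2.trans h1
    rw [hr, one_smul] at h3
    have := congrArg (fun z => z - a) h3
    simpa using this
  have hzero : r₁ * s + r₂ * t = 0 := by
    rcases smul_eq_zero.1 hcomb with h | h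
    · exact h
    · exact absurd h hba
  have hs0 : s = 0 := by nlinarith [hs.1, hs.2, ht.1, ht.2]
  have ht0 : t = 0 := by nlinarith [hs.1, hs.2, ht.1, ht.2]
  subst hs0; subst ht0
  simp

lemma walk_of_ham {d : ℕ} {V : Finset (Fin d → ℝ)}
    (hV01 : ∀ x ∈ V, ∀ i, x i = 0 ∨ x i = 1) :
    ∀ (n : ℕ) (u v : Fin d → ℝ),
    u ∈ (convexHull ℝ (V : Set (Fin d → ℝ))).extremePoints ℝ →
    v ∈ (convexHull ℝ (V : Set (Fin d → ℝ))).extremePoints ℝ →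
    Ham u v ≤ n →
    ∃ p : (edgeGraph d (convexHull ℝ (V : Set (Fin d → ℝ)))).Walk u v, p.length ≤ n := by
  intro n
  induction n with
  | zero =>
    intro u v hu hv hham
    have : u = v := ham_eq_zero (Nat.le_zero.1 hham)
    subst this
    exact ⟨SimpleGraph.Walk.nil, by simp⟩
  | succ n IH =>
    intro u v hu hv hham
    rcases eq_or_ne u v with rfl | hne
    · exact ⟨SimpleGraph.Walk.nil, by simp⟩
    · have hu01 : ∀ i, u i = 0 ∨ u i = 1 := hV01 u (extremePoints_convexHull_subset hu)
      have hv01 : ∀ i, v i = 0 ∨ v i = 1 := hV01 v (extremePoints_convexHull_subset hv)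
      set c : (Fin d → ℝ) →ₗ[ℝ] ℝ := dotp (fun i => 2 * v i - 1) with hc
      have hcv : c u < c v := by
        have h1 := cdiff hu01 hv01
        have h2 : (0:ℝ) < (Ham u v : ℝ) := by exact_mod_cast ham_pos hne
        rw [hc]; linarith
      obtain ⟨w, hwext, hwc, hwedge⟩ := improving_edge_aux V.card V (le_refl _) u v c hu
        hv.1 hcv
      have hw01 : ∀ i, w i = 0 ∨ w i = 1 := hV01 w (extremePoints_convexHull_subset hwext)
      have hwv : Ham w v ≤ n := by
        have h1 := cdiff hu01 hv01
        have h2 := cdiff hw01 hv01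
        have hlt : (Ham w v : ℝ) < (Ham u v : ℝ) := by rw [hc] at hwc; linarith
        have := Nat.cast_lt.1 hlt
        omega
      obtain ⟨q, hq⟩ := IH w v hwext hv hwv
      have hadj : (edgeGraph d (convexHull ℝ (V : Set (Fin d → ℝ)))).Adj u w :=
        ⟨fun h => absurd (h ▸ hwc) (lt_irrefl _), hwedge⟩
      exact ⟨SimpleGraph.Walk.cons hadj q, by simpa using Nat.succ_le_succ hq⟩

noncomputable def cubeV (d : ℕ) : Finset (Fin d → ℝ) :=
  Finset.image (fun b : Fin d → Bool => fun i => if b i then (1:ℝ) else 0) Finset.univ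

lemma mem_cubeV {d : ℕ} {x : Fin d → ℝ} :
    x ∈ cubeV d ↔ ∀ i, x i = 0 ∨ x i = 1 := by
  classical
  constructor
  · intro hx i
    obtain ⟨b, _, rfl⟩ := Finset.mem_image.1 hx
    by_cases h : b i <;> simp [h]
  · intro hx
    refine Finset.mem_image.2 ⟨fun i => if x i = 1 then true else false, Finset.mem_univ _, ?_⟩
    funext i
    rcases hx i with h | h <;> simp [h]

lemma cubeV_extreme {d : ℕ} {x : Fin d → ℝ} (hx : x ∈ cubeV d) :
    x ∈ (convexHull ℝ ((cubeV d) : Set (Fin d → ℝ))).extremePoints ℝ := by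
  refine unique_argmax_extreme (g := dotp (fun i => 2 * x i - 1)) hx ?_
  intro v hv hvx
  have h := cdiff (mem_cubeV.1 hv) (mem_cubeV.1 hx)
  have hp : (0:ℝ) < (Ham v x : ℝ) := by exact_mod_cast ham_pos hvx
  linarith

lemma cube_adj_ham {d : ℕ} {a b : Fin d → ℝ}
    (h : (edgeGraph d (convexHull ℝ ((cubeV d) : Set (Fin d → ℝ)))).Adj a b) : Ham a b = 1 := by
  classical
  obtain ⟨hne, hext⟩ := h
  have haseg : a ∈ (segment ℝ a b).extremePoints ℝ := endpoint_extreme hne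
  have hbseg : b ∈ (segment ℝ b a).extremePoints ℝ := endpoint_extreme hne.symm
  rw [segment_symm] at hbseg
  have haC := hext.extremePoints_subset_extremePoints haseg
  have hbC := hext.extremePoints_subset_extremePoints hbseg
  have ha01 := mem_cubeV.1 (extremePoints_convexHull_subset haC)
  have hb01 := mem_cubeV.1 (extremePoints_convexHull_subset hbC)
  have h1 : 0 < Ham a b := ham_pos hne
  by_contra hcon
  have h2 : 1 < (Finset.univ.filter (fun i => a i ≠ b i)).card := by
    have h3 : Ham a b ≠ 1 := hcon
    have h4 : Ham a b = (Finset.univ.filter (fun i => a i ≠ b i)).card := rfl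
    rw [h4] at h3 h1
    omega
  obtain ⟨i, hi, j, hj, hij⟩ := Finset.one_lt_card.1 h2
  have hiab : a i ≠ b i := (Finset.mem_filter.1 hi).2
  have hjab : a j ≠ b j := (Finset.mem_filter.1 hj).2
  set e : Fin d → ℝ := Function.update a i (b i) with he
  set e' : Fin d → ℝ := Function.update b i (a i) with he'
  have hei : e i = b i := Function.update_self i (b i) a
  have hej : ∀ k, k ≠ i → e k = a k := fun k hk => Function.update_of_ne hk _ _
  have he'i : e' i = a i := Function.update_self i (a i) b
  have he'j : ∀ k, k ≠ i → e' k = b k := fun k hk => Function.update_of_ne hk _ _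
  have heC : e ∈ convexHull ℝ ((cubeV d) : Set (Fin d → ℝ)) := by
    apply subset_convexHull
    refine Finset.mem_coe.2 (mem_cubeV.2 fun k => ?_)
    rcases eq_or_ne k i with rfl | hk
    · rw [hei]; exact hb01 k
    · rw [hej k hk]; exact ha01 k
  have he'C : e' ∈ convexHull ℝ ((cubeV d) : Set (Fin d → ℝ)) := by
    apply subset_convexHull
    refine Finset.mem_coe.2 (mem_cubeV.2 fun k => ?_)
    rcases eq_or_ne k i with rfl | hk
    · rw [he'i]; exact ha01 k
    · rw [he'j k hk]; exact hb01 k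
  have hee' : e ≠ e' := by
    intro hcontra
    have := congrFun hcontra j
    rw [hej j hij.symm, he'j j hij.symm] at this
    exact hjab this
  have hmseg : (1/2 : ℝ) • a + (1/2 : ℝ) • b ∈ segment ℝ a b :=
    ⟨1/2, 1/2, by norm_num, by norm_num, by norm_num, rfl⟩
  have hmid : (1/2 : ℝ) • a + (1/2 : ℝ) • b = (1/2 : ℝ) • e + (1/2 : ℝ) • e' := by
    funext k
    simp only [Pi.add_apply, Pi.smul_apply, smul_eq_mul]
    rcases eq_or_ne k i with rfl | hk
    · rw [hei, he'i]; ring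
    · rw [hej k hk, he'j k hk]
  have hmopen : (1/2 : ℝ) • a + (1/2 : ℝ) • b ∈ openSegment ℝ e e' := by
    rw [hmid]
    exact ⟨1/2, 1/2, by norm_num, by norm_num, by norm_num, rfl⟩
  have hmem := hext.2 heC he'C hmseg hmopen
  have heseg : e ∈ segment ℝ a b := hmem
  rw [segment_eq_image'] at heseg
  obtain ⟨t, ⟨ht0, ht1⟩, heq⟩ := heseg
  have hj' := congrFun heq j
  simp only [Pi.add_apply, Pi.smul_apply, Pi.sub_apply, smul_eq_mul] at hj'
  rw [hej j hij.symm] at hj'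
  have ht : t * (b j - a j) = 0 := by linarith
  have htz : t = 0 := by
    rcases mul_eq_zero.1 ht with h | h
    · exact h
    · exact absurd (sub_eq_zero.1 h) (Ne.symm hjab)
  have hi' := congrFun heq i
  simp only [Pi.add_apply, Pi.smul_apply, Pi.sub_apply, smul_eq_mul, htz] at hi'
  rw [hei] at hi'
  exact hiab (by linarith)

lemma ham_self {d : ℕ} (x : Fin d → ℝ) : Ham x x = 0 := by
  classical
  rw [show Ham x x = (Finset.univ.filter (fun i => x i ≠ x i)).card from rfl]
  simp

lemma ham_le_walk {d : ℕ} {x y : Fin d → ℝ}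
    (p : (edgeGraph d (convexHull ℝ ((cubeV d) : Set (Fin d → ℝ)))).Walk x y) :
    Ham x y ≤ p.length := by
  induction p with
  | nil => rw [ham_self]; simp
  | @cons a b c h q IH =>
    calc Ham a c ≤ Ham a b + Ham b c := ham_triangle a b c
      _ ≤ 1 + q.length := Nat.add_le_add (le_of_eq (cube_adj_ham h)) IH
      _ = (SimpleGraph.Walk.cons h q).length := by
        rw [SimpleGraph.Walk.length_cons]; omega

lemma lattice01 {d : ℕ} {V : Finset (Fin d → ℝ)}
    (hcoord : ∀ x ∈ V, ∀ i, ∃ m : ℕ, m ≤ 1 ∧ x i = (m : ℝ)) :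
    ∀ x ∈ V, ∀ i, x i = 0 ∨ x i = 1 := by
  intro x hx i
  obtain ⟨m, hm, hxi⟩ := hcoord x hx i
  rcases Nat.le_one_iff_eq_zero_or_eq_one.1 hm with rfl | rfl
  · left; rw [hxi]; norm_num
  · right; rw [hxi]; norm_num

lemma polyDiam_le {d : ℕ} {P : Set (Fin d → ℝ)} (hP : IsLatticePolytope d 1 P) :
    polyDiam d P ≤ d := by
  obtain ⟨V, hVne, hcoord, rfl⟩ := hP
  apply csSup_le'
  rintro n ⟨u, hu, v, hv, hdist⟩
  obtain ⟨p, hp⟩ := walk_of_ham (lattice01 hcoord) d u v hu hv (ham_le u v)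
  rw [← hdist]
  exact le_trans (SimpleGraph.dist_le p) hp

lemma cube_lattice (d : ℕ) :
    IsLatticePolytope d 1 (convexHull ℝ ((cubeV d) : Set (Fin d → ℝ))) := by
  refine ⟨cubeV d, ?_, ?_, rfl⟩
  · exact Finset.Nonempty.image Finset.univ_nonempty _
  · intro x hx i
    rcases mem_cubeV.1 hx i with h | h
    · exact ⟨0, by norm_num, by rw [h]; norm_num⟩
    · exact ⟨1, le_refl _, by rw [h]; norm_num⟩

lemma cube_dist (d : ℕ) :
    (edgeGraph d (convexHull ℝ ((cubeV d) : Set (Fin d → ℝ)))).dist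
      (fun _ => (0:ℝ)) (fun _ => (1:ℝ)) = d := by
  classical
  have h0 : (fun _ => (0:ℝ)) ∈ cubeV d := mem_cubeV.2 fun i => Or.inl rfl
  have h1 : (fun _ => (1:ℝ)) ∈ cubeV d := mem_cubeV.2 fun i => Or.inr rfl
  have hham : Ham (fun _ : Fin d => (0:ℝ)) (fun _ : Fin d => (1:ℝ)) = d := by
    rw [show Ham (fun _ : Fin d => (0:ℝ)) (fun _ : Fin d => (1:ℝ))
      = (Finset.univ.filter (fun _ : Fin d => (0:ℝ) ≠ 1)).card from rfl]
    simp
  obtain ⟨p, hp⟩ := walk_of_ham (fun x hx => mem_cubeV.1 hx) d _ _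
    (cubeV_extreme h0) (cubeV_extreme h1) (le_of_eq hham)
  apply le_antisymm
  · exact le_trans (SimpleGraph.dist_le p) hp
  · obtain ⟨q, hq⟩ := (p.reachable).exists_walk_length_eq_dist
    rw [← hq]
    exact le_trans (le_of_eq hham.symm) (ham_le_walk q)

lemma polyDiam_cube (d : ℕ) :
    polyDiam d (convexHull ℝ ((cubeV d) : Set (Fin d → ℝ))) = d := by
  apply le_antisymm (polyDiam_le (cube_lattice d))
  apply le_csSup
  · refine ⟨d, ?_⟩
    rintro n ⟨u, hu, v, hv, hdist⟩
    obtain ⟨p, hp⟩ := walk_of_ham (fun x hx => mem_cubeV.1 hx) d u v hu hv (ham_le u v)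
    rw [← hdist]
    exact le_trans (SimpleGraph.dist_le p) hp
  · exact ⟨_, cubeV_extreme (mem_cubeV.2 fun i => Or.inl rfl),
      _, cubeV_extreme (mem_cubeV.2 fun i => Or.inr rfl), cube_dist d⟩

theorem naddef_delta_d_1 (d : ℕ) (hd : 1 ≤ d) : deltaLP d 1 = d := by
  apply le_antisymm
  · apply csSup_le'
    rintro n ⟨P, hlat, hpd⟩
    rw [← hpd]
    exact polyDiam_le hlat
  · apply le_csSup
    · refine ⟨d, ?_⟩
      rintro n ⟨P, hlat, hpd⟩
      rw [← hpd]
      exact polyDiam_le hlat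
    · exact ⟨_, cube_lattice d, polyDiam_cube d⟩

end NaddefAux
end

section
/- For all d ≥ 1 and k ≥ 1, the diameter of any lattice (d,k)-polytope is at most kd. -/
open Set

open Set Finset
set_option linter.unusedSectionVars false

section Cone
variable {E : Type*} [NormedAddCommGroup E] [NormedSpace ℝ E] [DecidableEq E]

/-- conic combinations of a finite set -/
def coneOf (G : Finset E) : Set E :=
  {x | ∃ f : E → ℝ, (∀ g, 0 ≤ f g) ∧ x = ∑ g ∈ G, f g • g}

theorem coneOf_zero_mem (G : Finset E) : (0:E) ∈ coneOf G :=
  ⟨0, fun _ => le_refl 0, by simp⟩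

theorem mem_coneOf_self {G : Finset E} {g : E} (hg : g ∈ G) : g ∈ coneOf G := by
  classical
  refine ⟨fun e => if e = g then 1 else 0, fun e => by positivity, ?_⟩
  rw [Finset.sum_eq_single g] <;> simp +contextual [hg]

theorem coneOf_add_mem {G : Finset E} {x y : E} (hx : x ∈ coneOf G) (hy : y ∈ coneOf G) :
    x + y ∈ coneOf G := by
  obtain ⟨f, hf, rfl⟩ := hx
  obtain ⟨f', hf', rfl⟩ := hy
  exact ⟨f + f', fun g => add_nonneg (hf g) (hf' g), by simp [add_smul, Finset.sum_add_distrib]⟩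

theorem coneOf_smul_mem {G : Finset E} {x : E} {c : ℝ} (hc : 0 ≤ c) (hx : x ∈ coneOf G) :
    c • x ∈ coneOf G := by
  obtain ⟨f, hf, rfl⟩ := hx
  exact ⟨c • f, fun g => mul_nonneg hc (hf g), by simp [Finset.smul_sum, smul_smul]⟩

theorem coneOf_mono {G G' : Finset E} (h : G ⊆ G') : coneOf G ⊆ coneOf G' := by
  classical
  rintro x ⟨f, hf, rfl⟩
  refine ⟨fun e => if e ∈ G then f e else 0, fun e => by dsimp; split <;> [exact hf e; rfl], ?_⟩
  rw [← Finset.sum_subset h] <;> simp +contextual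

theorem coneOf_erase_absorb {G : Finset E} {g : E} (hg : g ∈ G)
    (h : g ∈ coneOf (G.erase g)) : coneOf G = coneOf (G.erase g) := by
  classical
  refine Set.Subset.antisymm ?_ (coneOf_mono (Finset.erase_subset _ _))
  rintro x ⟨f, hf, rfl⟩
  rw [← Finset.add_sum_erase _ _ hg]
  exact coneOf_add_mem (coneOf_smul_mem (hf g) h) ⟨f, hf, rfl⟩

/-- extreme direction of a cone -/
def IsED (C : Set E) (r : E) : Prop := ∀ a ∈ C, ∀ b ∈ C, r = a + b → ∃ t : ℝ, 0 ≤ t ∧ a = t • r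

def ConePointed (C : Set E) : Prop := ∀ x ∈ C, -x ∈ C → x = 0

theorem exists_ED : ∀ (n : ℕ) (G : Finset E), G.card ≤ n → ConePointed (coneOf G) →
    ∀ x ∈ coneOf G, ∀ c : E →ₗ[ℝ] ℝ, c x < 0 →
    ∃ r ∈ coneOf G, IsED (coneOf G) r ∧ c r < 0 := by
  classical
  intro n
  induction n with
  | zero =>
    intro G hcard _ x hx c hcx
    rw [Nat.le_zero, Finset.card_eq_zero] at hcard
    subst hcard
    obtain ⟨f, _, rfl⟩ := hx
    simp at hcx
  | succ n IH =>
    intro G hcard hpt x hx c hcx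
    obtain ⟨f, hf, rfl⟩ := hx
    have hsum : ∑ g ∈ G, f g * c g < 0 := by
      have := hcx
      rw [map_sum] at this
      simpa [map_smul, smul_eq_mul] using this
    have hex : ∃ g ∈ G, f g * c g < 0 := by
      by_contra hcon
      push_neg at hcon
      exact absurd (Finset.sum_nonneg hcon) (not_le.mpr hsum)
    obtain ⟨g, hgG, hgneg⟩ := hex
    have hcg : c g < 0 := by
      rcases lt_or_ge (c g) 0 with h | h
      · exact h
      · exact absurd (mul_nonneg (hf g) h) (not_le.mpr hgneg)
    have hg0 : g ≠ 0 := by rintro rfl; simp at hcg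
    by_cases hED : IsED (coneOf G) g
    · exact ⟨g, mem_coneOf_self hgG, hED, hcg⟩
    · -- g is not an extreme direction: show it is redundant
      unfold IsED at hED
      push_neg at hED
      obtain ⟨a, ha, b, hb, hab, hat⟩ := hED
      obtain ⟨fa, hfa, hfaeq⟩ := ha
      obtain ⟨fb, hfb, hfbeq⟩ := hb
      set a₀ : E := ∑ h ∈ G.erase g, fa h • h with ha₀
      set b₀ : E := ∑ h ∈ G.erase g, fb h • h with hb₀
      have ha₀C : a₀ ∈ coneOf (G.erase g) := ⟨fa, hfa, rfl⟩
      have hb₀C : b₀ ∈ coneOf (G.erase g) := ⟨fb, hfb, rfl⟩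
      have haeq : a = fa g • g + a₀ := by rw [hfaeq, ← Finset.add_sum_erase _ _ hgG]
      have hbeq : b = fb g • g + b₀ := by rw [hfbeq, ← Finset.add_sum_erase _ _ hgG]
      set s := fa g + fb g with hs
      have hg2 : g = (fa g + fb g) • g + (a₀ + b₀) := by
        conv_lhs => rw [hab, haeq, hbeq]
        rw [add_smul]; abel
      have h1 : (1 - s) • g = a₀ + b₀ := by
        rw [sub_smul, one_smul, sub_eq_iff_eq_add', hs]
        exact hg2
      rcases lt_or_ge s 1 with hs1 | hs1
      · -- g ∈ coneOf (erase): recurse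
        have hgmem : g ∈ coneOf (G.erase g) := by
          have h2 : (1 - s)⁻¹ • (a₀ + b₀) ∈ coneOf (G.erase g) :=
            coneOf_smul_mem (inv_nonneg.mpr (by linarith)) (coneOf_add_mem ha₀C hb₀C)
          have hkey : (1 - s)⁻¹ • (a₀ + b₀) = g := by
            rw [← h1, smul_smul, inv_mul_cancel₀ (by linarith), one_smul]
          rwa [hkey] at h2
        have heq := coneOf_erase_absorb hgG hgmem
        have hcard' : (G.erase g).card ≤ n := by
          have := Finset.card_erase_of_mem hgG
          omega
        have hx' : (∑ g ∈ G, f g • g) ∈ coneOf (G.erase g) := by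
          rw [← heq]; exact ⟨f, hf, rfl⟩
        obtain ⟨r, hr, hrED, hrc⟩ := IH (G.erase g) hcard' (by rw [← heq]; exact hpt) _ hx' c hcx
        exact ⟨r, by rw [heq]; exact hr, by rw [heq]; exact hrED, hrc⟩
      · -- s ≥ 1 leads to contradiction
        exfalso
        have hsub : coneOf (G.erase g) ⊆ coneOf G := coneOf_mono (Finset.erase_subset _ _)
        have hzero : (s - 1) • g = 0 := by
          apply hpt
          · exact coneOf_smul_mem (by linarith) (mem_coneOf_self hgG)
          · have hneg : -((s - 1) • g) = a₀ + b₀ := by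
              rw [← h1, ← neg_smul]; congr 1; ring
            rw [hneg]
            exact hsub (coneOf_add_mem ha₀C hb₀C)
        have hs1' : s = 1 := by
          rcases smul_eq_zero.mp hzero with h | h
          · linarith [sub_eq_zero.mp h]
          · exact absurd h hg0
        have hab0 : a₀ + b₀ = 0 := by
          rw [hs1'] at h1; simpa using h1.symm
        have ha₀0 : a₀ = 0 := by
          apply hpt _ (hsub ha₀C)
          have hba : b₀ = -a₀ := by rw [eq_neg_iff_add_eq_zero, add_comm]; exact hab0
          exact hsub (hba ▸ hb₀C)
        exact hat (fa g) (hfa g) (by rw [haeq, ha₀0, add_zero])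

end Cone

section EdgeLemma
variable {E : Type*} [NormedAddCommGroup E] [NormedSpace ℝ E] [DecidableEq E]

/-- points of the hull, translated to the vertex cone -/
theorem sub_mem_coneOf {V : Finset E} {u q : E} (hq : q ∈ convexHull ℝ (V : Set E)) :
    q - u ∈ coneOf (V.image (· - u)) := by
  classical
  rw [Finset.convexHull_eq] at hq
  obtain ⟨w, hw0, hw1, hwq⟩ := hq
  rw [Finset.centerMass_eq_of_sum_1 _ _ hw1] at hwq
  simp only [id] at hwq
  have hinj : Set.InjOn (· - u) V := fun a _ b _ h => by
    simpa using sub_left_injective h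
  refine ⟨fun e => if e + u ∈ V then w (e + u) else 0, fun e => ?_, ?_⟩
  · dsimp only; split
    · exact hw0 _ (by assumption)
    · rfl
  · have hcong : ∀ v ∈ V, (if v - u + u ∈ V then w (v - u + u) else 0) • (v - u)
        = w v • (v - u) := by
      intro v hv
      rw [sub_add_cancel, if_pos hv]
    refine Eq.symm ?_
    rw [Finset.sum_image hinj]
    calc ∑ v ∈ V, (if v - u + u ∈ V then w (v - u + u) else 0) • (v - u)
        = ∑ v ∈ V, w v • (v - u) := Finset.sum_congr rfl hcong
      _ = ∑ v ∈ V, w v • v - ∑ v ∈ V, w v • u := by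
          simp only [smul_sub]; rw [Finset.sum_sub_distrib]
      _ = q - u := by rw [hwq, ← Finset.sum_smul, hw1, one_smul]

/-- nonzero cone elements are feasible directions -/
theorem coneOf_feasible {V : Finset E} {u x : E} (hu : u ∈ convexHull ℝ (V : Set E))
    (hx : x ∈ coneOf (V.image (· - u))) (hx0 : x ≠ 0) :
    ∃ t : ℝ, 0 < t ∧ u + t • x ∈ convexHull ℝ (V : Set E) := by
  classical
  obtain ⟨f, hf, rfl⟩ := hx
  set G := V.image (· - u) with hG
  set S := ∑ g ∈ G, f g with hS
  have hS0 : 0 < S := by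
    rcases lt_or_eq_of_le (Finset.sum_nonneg (fun g _ => hf g)) with h | h
    · exact h
    · exfalso
      apply hx0
      have hz := (Finset.sum_eq_zero_iff_of_nonneg (fun g _ => hf g)).mp h.symm
      exact Finset.sum_eq_zero fun g hg => by rw [hz g hg, zero_smul]
  refine ⟨S⁻¹, by positivity, ?_⟩
  have hz : ∀ g ∈ G, u + g ∈ (V : Set E) := by
    intro g hg
    obtain ⟨v, hv, rfl⟩ := Finset.mem_image.mp hg
    simpa using hv
  have hmem := Finset.centerMass_mem_convexHull G (fun g _ => hf g) (by rw [← hS]; exact hS0) hz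
  have hcm : G.centerMass f (fun g => u + g) = u + S⁻¹ • ∑ g ∈ G, f g • g := by
    rw [Finset.centerMass, ← hS]
    have : ∑ g ∈ G, f g • (u + g) = S • u + ∑ g ∈ G, f g • g := by
      rw [Finset.sum_congr rfl fun g _ => smul_add (f g) u g, Finset.sum_add_distrib,
        ← Finset.sum_smul, hS]
    rw [this, smul_add, smul_smul, inv_mul_cancel₀ (ne_of_gt hS0), one_smul]
  rwa [hcm] at hmem

/-- the vertex cone of an extreme point is pointed -/
theorem coneOf_pointed {V : Finset E} {u : E}
    (hu : u ∈ (convexHull ℝ (V : Set E)).extremePoints ℝ) :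
    ConePointed (coneOf (V.image (· - u))) := by
  intro x hx hmx
  by_contra hx0
  obtain ⟨t₁, ht₁, hP₁⟩ := coneOf_feasible hu.1 hx hx0
  obtain ⟨t₂, ht₂, hP₂⟩ := coneOf_feasible hu.1 hmx (by simpa using hx0)
  have hseg : u ∈ openSegment ℝ (u + t₁ • x) (u + t₂ • -x) := by
    refine ⟨t₂ / (t₁ + t₂), t₁ / (t₁ + t₂), by positivity, by positivity, ?_, ?_⟩
    · field_simp; ring
    · have h1 : t₂ / (t₁ + t₂) * t₁ - t₁ / (t₁ + t₂) * t₂ = 0 := by field_simp; ring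
      have h2 : t₂ / (t₁ + t₂) + t₁ / (t₁ + t₂) = 1 := by field_simp; ring
      calc (t₂ / (t₁ + t₂)) • (u + t₁ • x) + (t₁ / (t₁ + t₂)) • (u + t₂ • -x)
          = (t₂ / (t₁ + t₂) + t₁ / (t₁ + t₂)) • u
            + (t₂ / (t₁ + t₂) * t₁ - t₁ / (t₁ + t₂) * t₂) • x := by
            simp only [smul_add, add_smul, sub_smul, smul_neg, smul_smul]; abel
        _ = u := by rw [h1, h2, one_smul, zero_smul, add_zero]
  have hq := hu.2 hP₁ hP₂ hseg
  have h : t₁ • x = 0 := by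
    have h2 := congrArg (fun y => y - u) hq
    simpa using h2
  rcases smul_eq_zero.mp h with h2 | h2
  · exact absurd h2 (ne_of_gt ht₁)
  · exact hx0 h2

theorem seg_param_mem {u r : E} {t s : ℝ} (ht : 0 < t) (hs : 0 ≤ s) (hst : s ≤ t) :
    u + s • r ∈ segment ℝ u (u + t • r) := by
  refine ⟨1 - s / t, s / t, by rw [sub_nonneg]; exact div_le_one_of_le₀ hst ht.le,
    by positivity, by ring, ?_⟩
  rw [smul_add, smul_smul, div_mul_cancel₀ _ (ne_of_gt ht), ← add_assoc, ← add_smul,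
    sub_add_cancel, one_smul]

theorem seg_param_rev {u r w : E} {t : ℝ} (ht : 0 < t) (hw : w = u + t • r) {x : E}
    (hx : x ∈ segment ℝ u w) : ∃ s : ℝ, 0 ≤ s ∧ s ≤ t ∧ x = u + s • r := by
  obtain ⟨a, b, ha, hb, hab, rfl⟩ := hx
  refine ⟨b * t, by positivity, by nlinarith, ?_⟩
  rw [hw, smul_add, smul_smul, ← add_assoc, ← add_smul, hab, one_smul]

end EdgeLemma

section EdgeMain
variable {E : Type*} [NormedAddCommGroup E] [NormedSpace ℝ E] [DecidableEq E]

theorem exists_edge_neighbor {V : Finset E} {u : E}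
    (hu : u ∈ (convexHull ℝ (V : Set E)).extremePoints ℝ)
    (c : E →ₗ[ℝ] ℝ) {p : E} (hp : p ∈ convexHull ℝ (V : Set E)) (hpc : c p < c u) :
    ∃ w, w ≠ u ∧ c w < c u ∧ IsExtreme ℝ (convexHull ℝ (V : Set E)) (segment ℝ u w) ∧
      w ∈ (convexHull ℝ (V : Set E)).extremePoints ℝ := by
  classical
  set P := convexHull ℝ (V : Set E) with hPdef
  have huP : u ∈ P := hu.1
  set G := V.image (· - u) with hGdef
  have hpt : ConePointed (coneOf G) := coneOf_pointed hu
  have hpu : p - u ∈ coneOf G := sub_mem_coneOf hp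
  have hcpu : c (p - u) < 0 := by rw [map_sub]; linarith
  obtain ⟨r, hrC, hrED, hrc⟩ := exists_ED G.card G le_rfl hpt _ hpu c hcpu
  have hr0 : r ≠ 0 := by rintro rfl; simp at hrc
  set T := {t : ℝ | 0 ≤ t ∧ u + t • r ∈ P} with hTdef
  have hT0 : (0:ℝ) ∈ T := ⟨le_rfl, by simpa using huP⟩
  have hTne : T.Nonempty := ⟨0, hT0⟩
  have hPcpt : IsCompact P := V.finite_toSet.isCompact_convexHull ℝ
  have hTbdd : BddAbove T := by
    obtain ⟨R, hR⟩ := isBounded_iff_forall_norm_le.mp hPcpt.isBounded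
    refine ⟨(‖u‖ + R) / ‖r‖, fun t ht => ?_⟩
    have h1 : ‖t • r‖ ≤ ‖u‖ + R := by
      have h2 := hR _ ht.2
      calc ‖t • r‖ = ‖(u + t • r) - u‖ := by congr 1; abel
        _ ≤ ‖u + t • r‖ + ‖u‖ := norm_sub_le _ _
        _ ≤ ‖u‖ + R := by linarith
    rw [norm_smul, Real.norm_eq_abs, abs_of_nonneg ht.1] at h1
    rw [le_div_iff₀ (norm_pos_iff.mpr hr0)]
    exact h1
  have hTclosed : IsClosed T := by
    have h1 : Continuous fun t : ℝ => u + t • r :=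
      continuous_const.add (continuous_id.smul continuous_const)
    exact (isClosed_le continuous_const continuous_id).inter (hPcpt.isClosed.preimage h1)
  set t0 := sSup T with ht0def
  have ht0T : t0 ∈ T := hTclosed.csSup_mem hTne hTbdd
  have ht0pos : 0 < t0 := by
    obtain ⟨t₁, ht₁, hP₁⟩ := coneOf_feasible huP hrC hr0
    exact lt_of_lt_of_le ht₁ (le_csSup hTbdd ⟨ht₁.le, hP₁⟩)
  set w := u + t0 • r with hwdef
  have hwP : w ∈ P := ht0T.2
  have hwu : w ≠ u := by
    intro h
    have : t0 • r = 0 := by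
      have h2 := congrArg (fun y => y - u) h
      simpa [hwdef] using h2
    rcases smul_eq_zero.mp this with h' | h'
    · exact absurd h' (ne_of_gt ht0pos)
    · exact hr0 h'
  have hwc : c w < c u := by
    have : c w = c u + t0 * c r := by rw [hwdef, map_add, map_smul, smul_eq_mul]
    nlinarith
  have hseg_sub : segment ℝ u w ⊆ P := (convex_convexHull ℝ _).segment_subset huP hwP
  have hext : IsExtreme ℝ P (segment ℝ u w) := by
    refine ⟨hseg_sub, ?_⟩
    intro x₁ hx₁ x₂ hx₂ x hxseg hxopen
    obtain ⟨s, hs0, hst, rfl⟩ := seg_param_rev ht0pos hwdef hxseg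
    rcases eq_or_lt_of_le hs0 with hs | hs
    · -- x = u
      have hxu : u + s • r = u := by rw [← hs]; simp
      rw [hxu] at hxopen
      have hq := hu.2 hx₁ hx₂ hxopen
      rw [hq]
      exact left_mem_segment ℝ u w
    · obtain ⟨α, β, hα, hβ, hαβ, hsum⟩ := hxopen
      have ha : α • (x₁ - u) ∈ coneOf G := coneOf_smul_mem hα.le (sub_mem_coneOf hx₁)
      have hb : β • (x₂ - u) ∈ coneOf G := coneOf_smul_mem hβ.le (sub_mem_coneOf hx₂)
      have habs : α • (x₁ - u) + β • (x₂ - u) = s • r := by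
        calc α • (x₁ - u) + β • (x₂ - u) = (α • x₁ + β • x₂) - (α + β) • u := by
              simp only [smul_sub, add_smul]; abel
          _ = (u + s • r) - u := by rw [hsum, hαβ, one_smul]
          _ = s • r := by abel
      have hdec : r = s⁻¹ • (α • (x₁ - u)) + s⁻¹ • (β • (x₂ - u)) := by
        rw [← smul_add, habs, smul_smul, inv_mul_cancel₀ (ne_of_gt hs), one_smul]
      have hmem_seg : ∀ {q : E}, q ∈ P → ∀ {γ t : ℝ}, 0 < γ → 0 ≤ t →
          s⁻¹ • (γ • (q - u)) = t • r → q ∈ segment ℝ u w := by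
        intro q hq γ t hγ ht hEq
        have h2 : γ • (q - u) = (s * t) • r := by
          have h3 := congrArg (fun y => s • y) hEq
          simp only [smul_smul] at h3
          rw [← mul_assoc, mul_inv_cancel₀ (ne_of_gt hs), one_mul] at h3
          exact h3
        have h1 : q - u = (s * t / γ) • r := by
          calc q - u = γ⁻¹ • (γ • (q - u)) := by
                rw [smul_smul, inv_mul_cancel₀ (ne_of_gt hγ), one_smul]
            _ = γ⁻¹ • ((s * t) • r) := by rw [h2]
            _ = (s * t / γ) • r := by rw [smul_smul]; congr 1; field_simp
        have hq_eq : q = u + (s * t / γ) • r := by rw [← h1]; abel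
        have hτ : (s * t / γ) ∈ T := ⟨by positivity, by rw [← hq_eq]; exact hq⟩
        rw [hq_eq, hwdef]
        exact seg_param_mem ht0pos (by positivity) (le_csSup hTbdd hτ)
      have hsinv : (0:ℝ) ≤ s⁻¹ := inv_nonneg.mpr hs.le
      obtain ⟨t₁, ht₁, hEq₁⟩ := hrED _ (coneOf_smul_mem hsinv ha) _ (coneOf_smul_mem hsinv hb) hdec
      obtain ⟨t₂, ht₂, hEq₂⟩ := hrED _ (coneOf_smul_mem hsinv hb) _ (coneOf_smul_mem hsinv ha)
        (by rw [hdec, add_comm])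
      exact hmem_seg hx₁ hα ht₁ hEq₁
  have hwext : w ∈ P.extremePoints ℝ := by
    refine ⟨hwP, ?_⟩
    intro x₁ hx₁ x₂ hx₂ hxopen
    have hwseg : w ∈ segment ℝ u w := right_mem_segment ℝ u w
    have h12 := And.intro (hext.2 hx₁ hx₂ hwseg hxopen)
      (hext.2 hx₂ hx₁ hwseg (by rw [openSegment_symm]; exact hxopen))
    obtain ⟨s₁, hs₁0, hs₁t, hx₁eq⟩ := seg_param_rev ht0pos hwdef h12.1
    obtain ⟨s₂, hs₂0, hs₂t, hx₂eq⟩ := seg_param_rev ht0pos hwdef h12.2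
    obtain ⟨α, β, hα, hβ, hαβ, hsum⟩ := hxopen
    have hcoef : α * s₁ + β * s₂ = t0 := by
      have h3 : (α * s₁ + β * s₂) • r = t0 • r := by
        have h4 : α • x₁ + β • x₂ = u + t0 • r := hsum
        rw [hx₁eq, hx₂eq] at h4
        have h5 : α • (u + s₁ • r) + β • (u + s₂ • r)
            = (α + β) • u + (α * s₁ + β * s₂) • r := by
          simp only [smul_add, add_smul, smul_smul]; abel
        rw [h5, hαβ, one_smul] at h4
        exact add_left_cancel h4
      by_contra hne
      have h6 : (α * s₁ + β * s₂ - t0) • r = 0 := by rw [sub_smul, h3, sub_self]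
      rcases smul_eq_zero.mp h6 with h' | h'
      · exact hne (by linarith [sub_eq_zero.mp h'])
      · exact hr0 h'
    have hs₁ : s₁ = t0 := by nlinarith
    have hs₂ : s₂ = t0 := by nlinarith
    exact by rw [hx₁eq, hs₁, ← hwdef]
  exact ⟨w, hwu, hwc, hext, hwext⟩

end EdgeMain

section Path
open SimpleGraph

lemma extremePoints_subset_of_subset {E' : Type*} [AddCommGroup E'] [Module ℝ E'] {A B : Set E'}
    (hBA : B ⊆ A) {x : E'} (hxB : x ∈ B) (hx : x ∈ A.extremePoints ℝ) :
    x ∈ B.extremePoints ℝ :=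
  ⟨hxB, fun p hp q hq h => hx.2 (hBA hp) (hBA hq) h⟩

lemma exists_mono_walk {d : ℕ} (V : Finset (Fin d → ℝ)) (φ : (Fin d → ℝ) →ₗ[ℝ] ℝ)
    (g : (Fin d → ℝ) → ℕ)
    (hmono : ∀ x ∈ V, ∀ y ∈ V, φ x < φ y → g x < g y)
    (heq : ∀ x ∈ V, ∀ y ∈ V, φ x = φ y → g x = g y)
    {x₀ : Fin d → ℝ} (hx₀ : x₀ ∈ V) (hmin : ∀ x ∈ V, φ x₀ ≤ φ x) :
    ∀ (n : ℕ) (u : Fin d → ℝ), u ∈ (convexHull ℝ (V : Set (Fin d → ℝ))).extremePoints ℝ →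
      g u ≤ n →
    ∃ u' ∈ (convexHull ℝ (V : Set (Fin d → ℝ))).extremePoints ℝ, φ u' = φ x₀ ∧
      ∃ wk : (edgeGraph d (convexHull ℝ (V : Set (Fin d → ℝ)))).Walk u u',
        wk.length + g x₀ ≤ g u := by
  intro n
  induction n with
  | zero =>
    intro u hu hgu
    have huV := extremePoints_convexHull_subset hu
    have hphi : φ u = φ x₀ := by
      by_contra h
      have hlt : φ x₀ < φ u := lt_of_le_of_ne (hmin u huV) (fun h2 => h h2.symm)
      have := hmono _ hx₀ _ huV hlt
      omega
    exact ⟨u, hu, hphi, SimpleGraph.Walk.nil, by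
      have := heq _ hx₀ _ huV hphi.symm
      simp only [SimpleGraph.Walk.length_nil]
      omega⟩
  | succ n IH =>
    intro u hu hgu
    have huV := extremePoints_convexHull_subset hu
    rcases eq_or_lt_of_le (hmin u huV) with hphi | hlt
    · exact ⟨u, hu, hphi.symm, SimpleGraph.Walk.nil, by
        have := heq _ hx₀ _ huV hphi
        simp only [SimpleGraph.Walk.length_nil]
        omega⟩
    · obtain ⟨w, hwu, hwc, hext, hwext⟩ :=
        exists_edge_neighbor hu φ (subset_convexHull ℝ _ hx₀) hlt
      have hadj : (edgeGraph d (convexHull ℝ (V : Set (Fin d → ℝ)))).Adj u w :=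
        ⟨hwu.symm, hext⟩
      have hgw : g w < g u := hmono _ (extremePoints_convexHull_subset hwext) _ huV hwc
      obtain ⟨u', hu', hphi', wk, hwk⟩ := IH w hwext (by omega)
      exact ⟨u', hu', hphi', SimpleGraph.Walk.cons hadj wk, by
        simp only [SimpleGraph.Walk.length_cons]
        omega⟩

lemma hull_le_of_min {d : ℕ} {V : Finset (Fin d → ℝ)} (φ : (Fin d → ℝ) →ₗ[ℝ] ℝ) {a : ℝ}
    (hmin : ∀ x ∈ V, a ≤ φ x) {q : Fin d → ℝ}
    (hq : q ∈ convexHull ℝ (V : Set (Fin d → ℝ))) : a ≤ φ q := by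
  have hconv : Convex ℝ {y : Fin d → ℝ | a ≤ φ y} := convex_halfSpace_ge φ.isLinear a
  exact convexHull_min hmin hconv hq

lemma face_extreme {d : ℕ} {V : Finset (Fin d → ℝ)} (φ : (Fin d → ℝ) →ₗ[ℝ] ℝ) {a : ℝ}
    (hmin : ∀ x ∈ V, a ≤ φ x) :
    IsExtreme ℝ (convexHull ℝ (V : Set (Fin d → ℝ)))
      {x ∈ convexHull ℝ (V : Set (Fin d → ℝ)) | φ x = a} := by
  constructor
  · exact fun x hx => hx.1
  · intro x₁ hx₁ x₂ hx₂ x hx hxopen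
    obtain ⟨α, β, hα, hβ, hαβ, hsum⟩ := hxopen
    have h1 : a ≤ φ x₁ := hull_le_of_min φ hmin hx₁
    have h2 : a ≤ φ x₂ := hull_le_of_min φ hmin hx₂
    have h3 : α * φ x₁ + β * φ x₂ = a := by
      have := congrArg φ hsum
      rw [map_add, map_smul, map_smul] at this
      simpa [smul_eq_mul, hx.2] using this
    have h4 : α * (φ x₁ - a) + β * (φ x₂ - a) = 0 := by linear_combination h3 - a * hαβ
    have k1 : 0 ≤ α * (φ x₁ - a) := mul_nonneg hα.le (sub_nonneg.mpr h1)
    have k2 : 0 ≤ β * (φ x₂ - a) := mul_nonneg hβ.le (sub_nonneg.mpr h2)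
    have e1 : α * (φ x₁ - a) = 0 := by linarith
    have e2 : β * (φ x₂ - a) = 0 := by linarith
    have hx₁a : φ x₁ = a := by
      rcases mul_eq_zero.mp e1 with h | h
      · linarith
      · linarith [sub_eq_zero.mp h]
    have hx₂a : φ x₂ = a := by
      rcases mul_eq_zero.mp e2 with h | h
      · linarith
      · linarith [sub_eq_zero.mp h]
    exact ⟨hx₁, hx₁a⟩

lemma face_eq_hull {d : ℕ} {V : Finset (Fin d → ℝ)} (φ : (Fin d → ℝ) →ₗ[ℝ] ℝ) {a : ℝ}
    [DecidablePred fun x : Fin d → ℝ => φ x = a]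
    (hmin : ∀ x ∈ V, a ≤ φ x) :
    {x ∈ convexHull ℝ (V : Set (Fin d → ℝ)) | φ x = a} =
      convexHull ℝ ((V.filter fun x => φ x = a) : Set (Fin d → ℝ)) := by
  apply Set.Subset.antisymm
  · rintro x ⟨hxP, hxa⟩
    rw [Finset.convexHull_eq] at hxP
    obtain ⟨w, hw0, hw1, hwx⟩ := hxP
    rw [Finset.centerMass_eq_of_sum_1 _ _ hw1] at hwx
    simp only [id] at hwx
    have hzero : ∀ v ∈ V, φ v ≠ a → w v = 0 := by
      have hsum0 : ∑ v ∈ V, w v * (φ v - a) = 0 := by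
        have hφx : ∑ v ∈ V, w v * φ v = a := by
          have := congrArg φ hwx
          rw [map_sum] at this
          simp only [map_smul, smul_eq_mul] at this
          rw [this]; exact hxa
        calc ∑ v ∈ V, w v * (φ v - a) = ∑ v ∈ V, w v * φ v - (∑ v ∈ V, w v) * a := by
              rw [Finset.sum_mul]
              rw [← Finset.sum_sub_distrib]
              congr 1; funext v; ring
          _ = 0 := by rw [hφx, hw1, one_mul, sub_self]
      intro v hv hva
      have hterm := (Finset.sum_eq_zero_iff_of_nonneg fun v hv =>
        mul_nonneg (hw0 v hv) (by linarith [hmin v hv])).mp hsum0 v hv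
      rcases mul_eq_zero.mp hterm with h | h
      · exact h
      · exact absurd (by linarith [sub_eq_zero.mp h] : φ v = a) hva
    set V' := V.filter fun x => φ x = a with hV'
    have hsubs : V' ⊆ V := Finset.filter_subset _ _
    have hsum1 : ∑ v ∈ V', w v = 1 := by
      rw [← hw1]
      exact (Finset.sum_subset hsubs fun v hv hv' => hzero v hv (by
        intro h; exact hv' (Finset.mem_filter.mpr ⟨hv, h⟩)))
    have hsumx : ∑ v ∈ V', w v • v = x := by
      rw [← hwx]
      exact (Finset.sum_subset hsubs fun v hv hv' => by
        rw [hzero v hv (fun h => hv' (Finset.mem_filter.mpr ⟨hv, h⟩)), zero_smul])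
    rw [Finset.convexHull_eq]
    refine ⟨w, fun y hy => hw0 y (hsubs hy), hsum1, ?_⟩
    rw [Finset.centerMass_eq_of_sum_1 _ _ hsum1]
    simpa [id] using hsumx
  · intro x hx
    constructor
    · exact convexHull_mono (by exact_mod_cast Finset.filter_subset _ _) hx
    · have hconv : Convex ℝ {y : Fin d → ℝ | φ y = a} := convex_hyperplane φ.isLinear a
      refine convexHull_min ?_ hconv hx
      intro y hy
      exact (Finset.mem_filter.mp (by exact_mod_cast hy)).2

lemma edgeGraph_mono {d : ℕ} {P F : Set (Fin d → ℝ)} (h : IsExtreme ℝ P F) :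
    edgeGraph d F ≤ edgeGraph d P := fun _ _ hab => ⟨hab.1, h.trans hab.2⟩

end Path

section Main
open SimpleGraph

lemma face_mid_walk {d k n : ℕ}
    (IH : ∀ (I : Finset (Fin d)) (V : Finset (Fin d → ℝ)), I.card ≤ n →
      (∀ x ∈ V, ∀ i, ∃ m : ℕ, m ≤ k ∧ x i = (m : ℝ)) →
      (∀ x ∈ V, ∀ y ∈ V, ∀ j, j ∉ I → x j = y j) →
      ∀ u ∈ (convexHull ℝ (V : Set (Fin d → ℝ))).extremePoints ℝ,
      ∀ v ∈ (convexHull ℝ (V : Set (Fin d → ℝ))).extremePoints ℝ,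
      ∃ wk : (edgeGraph d (convexHull ℝ (V : Set (Fin d → ℝ)))).Walk u v,
        wk.length ≤ k * I.card)
    {I : Finset (Fin d)} {V : Finset (Fin d → ℝ)} {i : Fin d} (hiI : i ∈ I)
    (hIcard : I.card ≤ n + 1)
    (hlat : ∀ x ∈ V, ∀ i, ∃ m : ℕ, m ≤ k ∧ x i = (m : ℝ))
    (hagree : ∀ x ∈ V, ∀ y ∈ V, ∀ j, j ∉ I → x j = y j)
    (φ : (Fin d → ℝ) →ₗ[ℝ] ℝ) {a : ℝ} (hmin : ∀ x ∈ V, a ≤ φ x)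
    (hφi : ∀ x y : Fin d → ℝ, φ x = a → φ y = a → x i = y i)
    {u' v' : Fin d → ℝ}
    (hu' : u' ∈ (convexHull ℝ (V : Set (Fin d → ℝ))).extremePoints ℝ) (hu'a : φ u' = a)
    (hv' : v' ∈ (convexHull ℝ (V : Set (Fin d → ℝ))).extremePoints ℝ) (hv'a : φ v' = a) :
    ∃ wk : (edgeGraph d (convexHull ℝ (V : Set (Fin d → ℝ)))).Walk u' v',
      wk.length ≤ k * (I.card - 1) := by
  classical
  set V' := V.filter (fun x => φ x = a) with hV'
  set F := convexHull ℝ (V' : Set (Fin d → ℝ)) with hF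
  have hEeq := face_eq_hull (V := V) φ hmin
  have hFP : IsExtreme ℝ (convexHull ℝ (V : Set (Fin d → ℝ))) F := by
    rw [hF, hV', ← hEeq]; exact face_extreme φ hmin
  have hu'F : u' ∈ F := by rw [hF, hV', ← hEeq]; exact ⟨hu'.1, hu'a⟩
  have hv'F : v' ∈ F := by rw [hF, hV', ← hEeq]; exact ⟨hv'.1, hv'a⟩
  have hu'e : u' ∈ F.extremePoints ℝ := extremePoints_subset_of_subset hFP.1 hu'F hu'
  have hv'e : v' ∈ F.extremePoints ℝ := extremePoints_subset_of_subset hFP.1 hv'F hv'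
  have hlat' : ∀ x ∈ V', ∀ j, ∃ m : ℕ, m ≤ k ∧ x j = (m : ℝ) :=
    fun x hx => hlat x (Finset.filter_subset _ _ hx)
  have hagree' : ∀ x ∈ V', ∀ y ∈ V', ∀ j, j ∉ I.erase i → x j = y j := by
    intro x hx y hy j hj
    by_cases hji : j = i
    · subst hji
      exact hφi x y (Finset.mem_filter.mp hx).2 (Finset.mem_filter.mp hy).2
    · exact hagree x (Finset.filter_subset _ _ hx) y (Finset.filter_subset _ _ hy) j
        (fun hjI => hj (Finset.mem_erase.mpr ⟨hji, hjI⟩))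
  have hcard' : (I.erase i).card ≤ n := by
    rw [Finset.card_erase_of_mem hiI]
    have := Finset.card_pos.mpr ⟨i, hiI⟩
    omega
  obtain ⟨wk, hwk⟩ := IH (I.erase i) V' hcard' hlat' hagree' u' hu'e v' hv'e
  refine ⟨wk.mapLe (edgeGraph_mono hFP), ?_⟩
  rw [SimpleGraph.Walk.mapLe, SimpleGraph.Walk.length_map,
    Finset.card_erase_of_mem hiI] at *
  exact hwk

lemma KO_main {d : ℕ} (k : ℕ) :
    ∀ (n : ℕ) (I : Finset (Fin d)) (V : Finset (Fin d → ℝ)), I.card ≤ n →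
    (∀ x ∈ V, ∀ i, ∃ m : ℕ, m ≤ k ∧ x i = (m : ℝ)) →
    (∀ x ∈ V, ∀ y ∈ V, ∀ j, j ∉ I → x j = y j) →
    ∀ u ∈ (convexHull ℝ (V : Set (Fin d → ℝ))).extremePoints ℝ,
    ∀ v ∈ (convexHull ℝ (V : Set (Fin d → ℝ))).extremePoints ℝ,
    ∃ wk : (edgeGraph d (convexHull ℝ (V : Set (Fin d → ℝ)))).Walk u v,
      wk.length ≤ k * I.card := by
  intro n
  induction n with
  | zero =>
    intro I V hcard hlat hagree u hu v hv
    have hI : I = ∅ := Finset.card_eq_zero.mp (Nat.le_zero.mp hcard)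
    subst hI
    have huv : u = v := by
      funext j
      exact hagree u (extremePoints_convexHull_subset hu) v
        (extremePoints_convexHull_subset hv) j (by simp)
    subst huv
    exact ⟨SimpleGraph.Walk.nil, by simp⟩
  | succ n IH =>
    intro I V hcard hlat hagree u hu v hv
    rcases Finset.eq_empty_or_nonempty I with rfl | hIne
    · have huv : u = v := by
        funext j
        exact hagree u (extremePoints_convexHull_subset hu) v
          (extremePoints_convexHull_subset hv) j (by simp)
      subst huv
      exact ⟨SimpleGraph.Walk.nil, by simp⟩
    · obtain ⟨i, hiI⟩ := hIne
      classical
      have huV := extremePoints_convexHull_subset hu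
      have hvV := extremePoints_convexHull_subset hv
      have hVne : V.Nonempty := ⟨u, huV⟩
      obtain ⟨x₀, hx₀V, hx₀min⟩ := V.exists_min_image (fun x => x i) hVne
      obtain ⟨x₁, hx₁V, hx₁max⟩ := V.exists_max_image (fun x => x i) hVne
      have hfl : ∀ x ∈ V, ((⌊x i⌋₊ : ℝ) = x i ∧ ⌊x i⌋₊ ≤ k) := by
        intro x hx
        obtain ⟨m, hmk, hmx⟩ := hlat x hx i
        rw [hmx, Nat.floor_natCast]
        exact ⟨rfl, hmk⟩
      set g : (Fin d → ℝ) → ℕ := fun x => ⌊x i⌋₊ with hgdef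
      set gt : (Fin d → ℝ) → ℕ := fun x => k - ⌊x i⌋₊ with hgtdef
      set φb : (Fin d → ℝ) →ₗ[ℝ] ℝ := LinearMap.proj i with hφbdef
      set φt : (Fin d → ℝ) →ₗ[ℝ] ℝ := -LinearMap.proj i with hφtdef
      have hφbx : ∀ x : Fin d → ℝ, φb x = x i := fun x => rfl
      have hφtx : ∀ x : Fin d → ℝ, φt x = -(x i) := fun x => rfl
      have hgmono : ∀ x ∈ V, ∀ y ∈ V, x i < y i → g x < g y := by
        intro x hx y hy h
        have hlt : ((g x : ℝ)) < (g y : ℝ) := by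
          rw [hgdef]; dsimp only
          rw [(hfl x hx).1, (hfl y hy).1]; exact h
        exact_mod_cast hlt
      have hgeq : ∀ x ∈ V, ∀ y ∈ V, x i = y i → g x = g y := by
        intro x hx y hy h
        have heq2 : ((g x : ℝ)) = (g y : ℝ) := by
          rw [hgdef]; dsimp only
          rw [(hfl x hx).1, (hfl y hy).1]; exact h
        exact_mod_cast heq2
      have hmono_b : ∀ x ∈ V, ∀ y ∈ V, φb x < φb y → g x < g y := by
        intro x hx y hy h; exact hgmono x hx y hy (by rw [← hφbx x, ← hφbx y]; exact h)
      have heq_b : ∀ x ∈ V, ∀ y ∈ V, φb x = φb y → g x = g y := by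
        intro x hx y hy h; exact hgeq x hx y hy (by rw [← hφbx x, ← hφbx y]; exact h)
      have hmono_t : ∀ x ∈ V, ∀ y ∈ V, φt x < φt y → gt x < gt y := by
        intro x hx y hy h
        have hyx : y i < x i := by
          have := h; rw [hφtx, hφtx] at this; linarith
        have h2 := hgmono y hy x hx hyx
        have h3 := (hfl x hx).2
        have h4 := (hfl y hy).2
        rw [hgtdef]; dsimp only
        rw [hgdef] at h2; dsimp only at h2
        omega
      have heq_t : ∀ x ∈ V, ∀ y ∈ V, φt x = φt y → gt x = gt y := by
        intro x hx y hy h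
        have hyx : y i = x i := by
          have := h; rw [hφtx, hφtx] at this; linarith
        have h2 := hgeq y hy x hx hyx
        rw [hgtdef]; dsimp only
        rw [hgdef] at h2; dsimp only at h2
        omega
      have hminb : ∀ x ∈ V, φb x₀ ≤ φb x := by
        intro x hx; rw [hφbx, hφbx]; exact hx₀min x hx
      have hmint : ∀ x ∈ V, φt x₁ ≤ φt x := by
        intro x hx; rw [hφtx, hφtx]; exact neg_le_neg (hx₁max x hx)
      obtain ⟨ub, hub, hubφ, wkub, hwkub⟩ :=
        exists_mono_walk V φb g hmono_b heq_b hx₀V hminb (g u) u hu le_rfl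
      obtain ⟨vb, hvb, hvbφ, wkvb, hwkvb⟩ :=
        exists_mono_walk V φb g hmono_b heq_b hx₀V hminb (g v) v hv le_rfl
      obtain ⟨ut, hut, hutφ, wkut, hwkut⟩ :=
        exists_mono_walk V φt gt hmono_t heq_t hx₁V hmint (gt u) u hu le_rfl
      obtain ⟨vt, hvt, hvtφ, wkvt, hwkvt⟩ :=
        exists_mono_walk V φt gt hmono_t heq_t hx₁V hmint (gt v) v hv le_rfl
      -- numeric facts
      have hAu : g x₀ ≤ g u := by
        have h1 : ((g x₀ : ℝ)) ≤ (g u : ℝ) := by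
          rw [hgdef]; dsimp only
          rw [(hfl x₀ hx₀V).1, (hfl u huV).1]; exact hx₀min u huV
        exact_mod_cast h1
      have hAv : g x₀ ≤ g v := by
        have h1 : ((g x₀ : ℝ)) ≤ (g v : ℝ) := by
          rw [hgdef]; dsimp only
          rw [(hfl x₀ hx₀V).1, (hfl v hvV).1]; exact hx₀min v hvV
        exact_mod_cast h1
      have hBu : g u ≤ g x₁ := by
        have h1 : ((g u : ℝ)) ≤ (g x₁ : ℝ) := by
          rw [hgdef]; dsimp only
          rw [(hfl u huV).1, (hfl x₁ hx₁V).1]; exact hx₁max u huV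
        exact_mod_cast h1
      have hBv : g v ≤ g x₁ := by
        have h1 : ((g v : ℝ)) ≤ (g x₁ : ℝ) := by
          rw [hgdef]; dsimp only
          rw [(hfl v hvV).1, (hfl x₁ hx₁V).1]; exact hx₁max v hvV
        exact_mod_cast h1
      have hBk : g x₁ ≤ k := (hfl x₁ hx₁V).2
      have hgtu : gt u = k - g u := rfl
      have hgtv : gt v = k - g v := rfl
      have hgtx₁ : gt x₁ = k - g x₁ := rfl
      obtain ⟨m, hm⟩ : ∃ m, I.card = m + 1 :=
        ⟨I.card - 1, by have := Finset.card_pos.mpr ⟨i, hiI⟩; omega⟩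
      by_cases hside : g u + g v ≤ k + g x₀ + g x₀
      · -- go to the bottom face
        have hφieq : ∀ x y : Fin d → ℝ, φb x = φb x₀ → φb y = φb x₀ → x i = y i := by
          intro x y h1 h2
          rw [hφbx, hφbx] at h1 h2
          rw [h1, h2]
        obtain ⟨wkm, hwkm⟩ := face_mid_walk IH hiI hcard hlat hagree φb hminb hφieq
          hub hubφ hvb hvbφ
        refine ⟨wkub.append (wkm.append wkvb.reverse), ?_⟩
        rw [SimpleGraph.Walk.length_append, SimpleGraph.Walk.length_append,
          SimpleGraph.Walk.length_reverse]
        rw [hm] at hwkm ⊢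
        simp only [Nat.add_sub_cancel] at hwkm
        have hmul : k * (m + 1) = k * m + k := by ring
        rw [hmul]
        obtain ⟨M, hM⟩ : ∃ M, k * m = M := ⟨_, rfl⟩
        rw [hM] at hwkm ⊢
        omega
      · -- go to the top face
        have hφieq : ∀ x y : Fin d → ℝ, φt x = φt x₁ → φt y = φt x₁ → x i = y i := by
          intro x y h1 h2
          rw [hφtx, hφtx] at h1 h2
          have : x i = x₁ i := by linarith
          have h2' : y i = x₁ i := by linarith
          rw [this, h2']
        obtain ⟨wkm, hwkm⟩ := face_mid_walk IH hiI hcard hlat hagree φt hmint hφieq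
          hut hutφ hvt hvtφ
        refine ⟨wkut.append (wkm.append wkvt.reverse), ?_⟩
        rw [SimpleGraph.Walk.length_append, SimpleGraph.Walk.length_append,
          SimpleGraph.Walk.length_reverse]
        rw [hm] at hwkm ⊢
        simp only [Nat.add_sub_cancel] at hwkm
        have hmul : k * (m + 1) = k * m + k := by ring
        rw [hmul]
        obtain ⟨M, hM⟩ : ∃ M, k * m = M := ⟨_, rfl⟩
        rw [hM] at hwkm ⊢
        rw [hgtu] at hwkut
        rw [hgtv] at hwkvt
        rw [hgtx₁] at hwkut hwkvt
        omega

end Main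

theorem kleinschmidt_onn (d k : ℕ) (hd : 1 ≤ d) (hk : 1 ≤ k)
    (P : Set (Fin d → ℝ)) (hP : IsLatticePolytope d k P) :
    polyDiam d P ≤ k * d := by
  obtain ⟨V, hVne, hlat, rfl⟩ := hP
  unfold polyDiam
  rcases Set.eq_empty_or_nonempty {n : ℕ | ∃ u ∈ (convexHull ℝ (V : Set (Fin d → ℝ))).extremePoints ℝ,
      ∃ v ∈ (convexHull ℝ (V : Set (Fin d → ℝ))).extremePoints ℝ,
      (edgeGraph d (convexHull ℝ (V : Set (Fin d → ℝ)))).dist u v = n} with he | hne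
  · rw [he, csSup_empty]
    exact Nat.zero_le _
  · refine csSup_le hne ?_
    rintro n ⟨u, hu, v, hv, rfl⟩
    obtain ⟨wk, hwk⟩ := KO_main k Finset.univ.card Finset.univ V le_rfl hlat
      (fun x _ y _ j hj => absurd (Finset.mem_univ j) hj) u hu v hv
    calc (edgeGraph d (convexHull ℝ (V : Set (Fin d → ℝ)))).dist u v ≤ wk.length :=
          SimpleGraph.dist_le wk
      _ ≤ k * Finset.univ.card := hwk
      _ = k * d := by rw [Finset.card_univ, Fintype.card_fin]
end
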